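/- arXiv:1301.1872 — 2 statements merged into one kernel-verified Lean document; each statement's English description precedes it below -/
import Mathlib

section
/- Let n ≥ 2, α ∈ [0,N) and γ > 1 be such that αγ < N, and let Q ⊆ ℝ^{n+1} be a parabolic cylinder. Then there exists a constant c depending only on α, γ and n such that for every measurable function g with ‖g‖_{M^γ(Q)} < ∞, ‖M*_{α,Q}(g)‖_{M^{Nγ/(N−αγ)}(Q)} ≤ c ‖g‖_{M^γ(Q)}. -/
open MeasureTheory Set ENNReal

/-- The (backward) parabolic cylinder `Q_R(x₀,t₀) = B(x₀,R) × (t₀ - R², t₀) ⊆ ℝⁿ × ℝ`. -/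
def parabolicCylinder (n : ℕ) (x₀ : EuclideanSpace ℝ (Fin n)) (t₀ R : ℝ) :
    Set (EuclideanSpace ℝ (Fin n) × ℝ) :=
  (Metric.ball x₀ R) ×ˢ (Set.Ioo (t₀ - R ^ 2) t₀)

/-- `Q` is a parabolic cylinder. -/
def IsParabolicCylinder (n : ℕ) (Q : Set (EuclideanSpace ℝ (Fin n) × ℝ)) : Prop :=
  ∃ (x₀ : EuclideanSpace ℝ (Fin n)) (t₀ R : ℝ), 0 < R ∧ Q = parabolicCylinder n x₀ t₀ R

/-- The restricted fractional maximal operator of order `α ∈ [0, N]`, `N = n + 2`, relative to a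
parabolic cylinder `Q₀`:
`M*_{α,Q₀}(g)(p) = sup { |Q|^{α/N} ⨍_Q |g| : Q ⊆ Q₀ a parabolic cylinder with p ∈ Q }`. -/
noncomputable def parMaximal (n : ℕ) (α : ℝ) (Q₀ : Set (EuclideanSpace ℝ (Fin n) × ℝ))
    (g : EuclideanSpace ℝ (Fin n) × ℝ → ℝ) (p : EuclideanSpace ℝ (Fin n) × ℝ) : ℝ≥0∞ :=
  ⨆ (Q : Set (EuclideanSpace ℝ (Fin n) × ℝ)) (_ : IsParabolicCylinder n Q) (_ : Q ⊆ Q₀)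
    (_ : p ∈ Q),
      volume Q ^ (α / ((n : ℝ) + 2)) * ((volume Q)⁻¹ * ∫⁻ q in Q, ENNReal.ofReal |g q|)

/-- The Marcinkiewicz (weak-`L^γ`) quasinorm of an `ℝ≥0∞`-valued function `F` on `E`:
`‖F‖_{M^γ(E)} = ( sup_{λ>0} λ^γ |{p ∈ E : F p > λ}| )^{1/γ}`. -/
noncomputable def marcinkiewiczNormE {n : ℕ} (E : Set (EuclideanSpace ℝ (Fin n) × ℝ))
    (F : EuclideanSpace ℝ (Fin n) × ℝ → ℝ≥0∞) (γ : ℝ) : ℝ≥0∞ :=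
  (⨆ (l : ℝ) (_ : 0 < l),
    ENNReal.ofReal (l ^ γ) * volume {p ∈ E | ENNReal.ofReal l < F p}) ^ (1 / γ)

lemma volume_pc {n : ℕ} (hn : 0 < n) (x : EuclideanSpace ℝ (Fin n)) (t R : ℝ) (hR : 0 ≤ R) :
    volume (parabolicCylinder n x t R)
      = volume (Metric.ball (0 : EuclideanSpace ℝ (Fin n)) 1) * ENNReal.ofReal (R ^ (n+2)) := by
  haveI : Nonempty (Fin n) := ⟨⟨0, hn⟩⟩
  haveI : Nontrivial (EuclideanSpace ℝ (Fin n)) := by infer_instance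
  rw [parabolicCylinder, Measure.volume_eq_prod, Measure.prod_prod,
    Measure.addHaar_ball _ _ hR, Real.volume_Ioo, finrank_euclideanSpace, Fintype.card_fin]
  rw [show t - (t - R ^ 2) = R ^ 2 by ring]
  rw [mul_comm (ENNReal.ofReal (R ^ n)) _, mul_assoc, ← ENNReal.ofReal_mul (by positivity),
    ← pow_add]

lemma pc_measurable {n : ℕ} (x : EuclideanSpace ℝ (Fin n)) (t R : ℝ) :
    MeasurableSet (parabolicCylinder n x t R) :=
  (Metric.isOpen_ball.prod isOpen_Ioo).measurableSet

lemma kappa_pos (n : ℕ) : 0 < volume (Metric.ball (0 : EuclideanSpace ℝ (Fin n)) 1) :=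
  Metric.measure_ball_pos _ _ one_pos

lemma kappa_ne_top (n : ℕ) : volume (Metric.ball (0 : EuclideanSpace ℝ (Fin n)) 1) ≠ ⊤ :=
  (measure_ball_lt_top).ne

lemma volume_pc_pos {n : ℕ} (hn : 0 < n) (x : EuclideanSpace ℝ (Fin n)) (t R : ℝ) (hR : 0 < R) :
    0 < volume (parabolicCylinder n x t R) := by
  rw [volume_pc hn x t R hR.le]
  exact ENNReal.mul_pos (kappa_pos n).ne' (by simp [ENNReal.ofReal_pos]; positivity)

lemma volume_pc_ne_top {n : ℕ} (hn : 0 < n) (x : EuclideanSpace ℝ (Fin n)) (t R : ℝ)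
    (hR : 0 < R) : volume (parabolicCylinder n x t R) ≠ ⊤ := by
  rw [volume_pc hn x t R hR.le]
  exact ENNReal.mul_ne_top (kappa_ne_top n) ENNReal.ofReal_ne_top

/-- Geometric enlargement lemma. -/
lemma pc_subset_enlargement {n : ℕ} {x₁ x₂ : EuclideanSpace ℝ (Fin n)} {t₁ t₂ R₁ R₂ : ℝ}
    (hR₁ : 0 < R₁) (hR₂ : 0 < R₂) (hle : R₁ ≤ 2 * R₂)
    (hne : (parabolicCylinder n x₁ t₁ R₁ ∩ parabolicCylinder n x₂ t₂ R₂).Nonempty) :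
    parabolicCylinder n x₁ t₁ R₁ ⊆
      (Metric.ball x₂ (5 * R₂)) ×ˢ (Set.Ioo (t₂ - 25 * R₂ ^ 2) (t₂ + 25 * R₂ ^ 2)) := by
  obtain ⟨⟨y, τ⟩, ⟨hy1, hτ1⟩, ⟨hy2, hτ2⟩⟩ := hne
  rintro ⟨z, σ⟩ ⟨hz, hσ⟩
  simp only [Metric.mem_ball, Set.mem_Ioo] at *
  have hsq : R₁ ^ 2 ≤ 4 * R₂ ^ 2 := by nlinarith
  refine ⟨?_, ?_, ?_⟩
  · calc dist z x₂ ≤ dist z x₁ + dist x₁ y + dist y x₂ := dist_triangle4 z x₁ y x₂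
      _ < R₁ + R₁ + R₂ := by
          have h1 : dist x₁ y < R₁ := by rw [dist_comm]; exact hy1
          exact add_lt_add (add_lt_add hz h1) hy2
      _ ≤ 5 * R₂ := by linarith
  · nlinarith [hσ.1, hσ.2, hτ1.1, hτ1.2, hτ2.1, hτ2.2]
  · nlinarith [hσ.1, hσ.2, hτ1.1, hτ1.2, hτ2.1, hτ2.2]

lemma enlargement_volume {n : ℕ} (hn : 0 < n) (x : EuclideanSpace ℝ (Fin n)) (t R : ℝ)
    (hR : 0 < R) :
    volume ((Metric.ball x (5 * R)) ×ˢ (Set.Ioo (t - 25 * R ^ 2) (t + 25 * R ^ 2)))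
      = ENNReal.ofReal (5 ^ n * 50) * volume (parabolicCylinder n x t R) := by
  haveI : Nonempty (Fin n) := ⟨⟨0, hn⟩⟩
  haveI : Nontrivial (EuclideanSpace ℝ (Fin n)) := by infer_instance
  rw [volume_pc hn x t R hR.le, Measure.volume_eq_prod, Measure.prod_prod,
    Measure.addHaar_ball _ _ (by positivity : (0:ℝ) ≤ 5 * R), Real.volume_Ioo,
    finrank_euclideanSpace, Fintype.card_fin]
  rw [show t + 25 * R ^ 2 - (t - 25 * R ^ 2) = 50 * R ^ 2 by ring]
  rw [mul_comm (ENNReal.ofReal ((5*R) ^ n)) _, mul_assoc, ← ENNReal.ofReal_mul (by positivity)]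
  rw [show ENNReal.ofReal (5 ^ n * 50) * (volume (Metric.ball (0 : EuclideanSpace ℝ (Fin n)) 1) * ENNReal.ofReal (R ^ (n+2)))
      = volume (Metric.ball (0 : EuclideanSpace ℝ (Fin n)) 1) * (ENNReal.ofReal (5 ^ n * 50) * ENNReal.ofReal (R ^ (n+2))) from by ring]
  rw [← ENNReal.ofReal_mul (by positivity : (0:ℝ) ≤ 5 ^ n * 50)]
  congr 1
  rw [mul_pow]; ring

/-- Vitali-type weak (1, 1/(1-β)) bound for the fractional maximal operator. -/
lemma vitali_bound {n : ℕ} (hn : 0 < n) {β : ℝ} (hβ0 : 0 ≤ β) (hβ1 : β < 1)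
    (Q₀ : Set (EuclideanSpace ℝ (Fin n) × ℝ)) (hQ₀ : volume Q₀ ≠ ⊤)
    (h : EuclideanSpace ℝ (Fin n) × ℝ → ℝ≥0∞) (hh : Measurable h)
    (lam : ℝ≥0∞) (hl0 : lam ≠ 0) (hltop : lam ≠ ⊤) :
    volume {p | ∃ Q, IsParabolicCylinder n Q ∧ Q ⊆ Q₀ ∧ p ∈ Q ∧
        lam * (volume Q) ^ (1-β) < ∫⁻ q in Q, h q}
      ≤ ENNReal.ofReal (5 ^ n * 50) *
        ((∫⁻ q in Q₀, h q) / lam) ^ ((1:ℝ)/(1-β)) := by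
  set I := ∫⁻ q in Q₀, h q with hI
  set S := {p | ∃ Q, IsParabolicCylinder n Q ∧ Q ⊆ Q₀ ∧ p ∈ Q ∧
        lam * (volume Q) ^ (1-β) < ∫⁻ q in Q, h q} with hS
  have hβ' : (0:ℝ) < 1 - β := by linarith
  -- trivial case I = 0
  rcases eq_or_ne I 0 with hI0 | hI0
  · have : S = ∅ := by
      ext p
      simp only [hS, Set.mem_setOf_eq, Set.mem_empty_iff_false, iff_false]
      rintro ⟨Q, hQc, hQsub, -, hlt⟩
      have h0 : ∫⁻ q in Q, h q = 0 :=
        le_antisymm (hI0 ▸ lintegral_mono_set hQsub) (zero_le)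
      rw [h0] at hlt
      exact (not_lt_of_ge (zero_le)) hlt
    rw [this]
    simp
  -- trivial case I = ⊤
  rcases eq_or_ne I ⊤ with hItop | hItop
  · rw [hItop, ENNReal.top_div_of_ne_top hltop,
      ENNReal.top_rpow_of_pos (by positivity), ENNReal.mul_top (by positivity)]
    exact le_top
  -- main case
  have hchoice : ∀ p : EuclideanSpace ℝ (Fin n) × ℝ, p ∈ S → ∃ x t R, 0 < R ∧
      (parabolicCylinder n x t R ⊆ Q₀ ∧ p ∈ parabolicCylinder n x t R ∧
        lam * (volume (parabolicCylinder n x t R)) ^ (1-β)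
          < ∫⁻ q in parabolicCylinder n x t R, h q) := by
    rintro p ⟨Q, ⟨x, t, R, hR, rfl⟩, hsub, hmem, hlt⟩
    exact ⟨x, t, R, hR, hsub, hmem, hlt⟩
  choose! xc tc Rc hRpos hQsub hmem hint using hchoice
  set B : EuclideanSpace ℝ (Fin n) × ℝ → Set (EuclideanSpace ℝ (Fin n) × ℝ) :=
    fun p => parabolicCylinder n (xc p) (tc p) (Rc p) with hB
  -- each selected cylinder has controlled measure
  have hIdiv_ne_top : I / lam ≠ ⊤ := (ENNReal.div_lt_top hItop hl0).ne
  have hmeas_le : ∀ p ∈ S, volume (B p) ≤ (I / lam) ^ ((1:ℝ)/(1-β)) := by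
    intro p hp
    have h1 : lam * (volume (B p)) ^ (1-β) ≤ I :=
      le_trans (hint p hp).le (lintegral_mono_set (hQsub p hp))
    have h2 : (volume (B p)) ^ (1-β) ≤ I / lam := by
      rw [ENNReal.le_div_iff_mul_le (Or.inl hl0) (Or.inl hltop), mul_comm]
      exact h1
    calc volume (B p) = ((volume (B p)) ^ (1-β)) ^ ((1:ℝ)/(1-β)) := by
          rw [← ENNReal.rpow_mul, mul_one_div, div_self hβ'.ne', ENNReal.rpow_one]
      _ ≤ (I / lam) ^ ((1:ℝ)/(1-β)) := ENNReal.rpow_le_rpow h2 (by positivity)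
  -- uniform radius bound
  set κ := volume (Metric.ball (0 : EuclideanSpace ℝ (Fin n)) 1) with hκ
  set Vmax := (I / lam) ^ ((1:ℝ)/(1-β)) with hVmax
  have hVmax_ne_top : Vmax ≠ ⊤ := ENNReal.rpow_ne_top_of_nonneg (by positivity) hIdiv_ne_top
  set Rb : ℝ := ((Vmax / κ).toReal) ^ ((1:ℝ)/(n+2)) with hRb
  have hRc_le : ∀ p ∈ S, Rc p ≤ Rb := by
    intro p hp
    have h1 : κ * ENNReal.ofReal (Rc p ^ (n+2)) ≤ Vmax := by
      rw [← volume_pc hn _ _ _ (hRpos p hp).le]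
      exact hmeas_le p hp
    have h2 : ENNReal.ofReal (Rc p ^ (n+2)) ≤ Vmax / κ := by
      rw [ENNReal.le_div_iff_mul_le (Or.inl (kappa_pos n).ne') (Or.inl (kappa_ne_top n)),
        mul_comm]
      exact h1
    have h3 : Rc p ^ (n+2) ≤ (Vmax / κ).toReal := by
      rw [← ENNReal.ofReal_le_iff_le_toReal ((ENNReal.div_lt_top hVmax_ne_top (kappa_pos n).ne').ne)]
      exact h2
    have h4 : Rc p = (Rc p ^ (n+2)) ^ ((1:ℝ)/(n+2)) := by
      rw [← Real.rpow_natCast (Rc p) (n+2), ← Real.rpow_mul (hRpos p hp).le,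
        mul_one_div]
      push_cast
      rw [div_self (by positivity : ((n:ℝ)+2) ≠ 0), Real.rpow_one]
    rw [h4, hRb]
    apply Real.rpow_le_rpow (pow_nonneg (hRpos p hp).le _) h3 (by positivity)
  -- Vitali covering
  obtain ⟨u, huS, hdisj, hcov⟩ :=
    Vitali.exists_disjoint_subfamily_covering_enlargement B S Rc 2 one_lt_two
      (fun p hp => (hRpos p hp).le) Rb hRc_le (fun p hp => ⟨p, hmem p hp⟩)
  -- countability
  have hBm : ∀ p, MeasurableSet (B p) := fun p => pc_measurable _ _ _
  have hBunion_ne_top : volume (⋃ b : u, B b) ≠ ⊤ := by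
    refine ne_top_of_le_ne_top hQ₀ (measure_mono ?_)
    exact Set.iUnion_subset fun b => hQsub b (huS b.2)
  have hu_cnt : u.Countable := by
    have hdisj' : Pairwise (Function.onFun Disjoint fun b : u => B b) := fun i j hij =>
      hdisj i.2 j.2 (fun e => hij (Subtype.ext e))
    have hcnt := MeasureTheory.Measure.countable_meas_pos_of_disjoint_of_meas_iUnion_ne_top
      (μ := volume) (As := fun b : u => B b) (fun b => hBm b) hdisj' hBunion_ne_top
    have : {b : u | 0 < volume (B b)} = Set.univ := by
      refine Set.eq_univ_of_forall fun b => ?_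
      exact volume_pc_pos hn _ _ _ (hRpos b (huS b.2))
    rw [this, Set.countable_univ_iff] at hcnt
    exact Set.countable_coe_iff.mp hcnt
  haveI := hu_cnt.to_subtype
  -- covering by enlargements
  set D : EuclideanSpace ℝ (Fin n) × ℝ → Set (EuclideanSpace ℝ (Fin n) × ℝ) :=
    fun b => (Metric.ball (xc b) (5 * Rc b)) ×ˢ
      (Set.Ioo (tc b - 25 * (Rc b) ^ 2) (tc b + 25 * (Rc b) ^ 2)) with hD
  have hScov : S ⊆ ⋃ b ∈ u, D b := by
    intro p hp
    obtain ⟨b, hbu, hbne, hble⟩ := hcov p hp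
    refine Set.mem_biUnion hbu ?_
    refine pc_subset_enlargement (hRpos p hp) (hRpos b (huS hbu)) hble hbne (hmem p hp)
  -- summing
  have hp1 : (1:ℝ) ≤ (1:ℝ)/(1-β) := by
    rw [le_div_iff₀ hβ']
    linarith
  have hx_pos : ∀ b ∈ u, (∫⁻ q in B b, h q) ≠ 0 := by
    intro b hbu
    refine fun h0 => ?_
    have := hint b (huS hbu)
    rw [h0] at this
    exact (not_lt_of_ge (zero_le)) this
  have hterm : ∀ b ∈ u, volume (B b)
      ≤ (I/lam) ^ ((1:ℝ)/(1-β) - 1) * ((∫⁻ q in B b, h q) / lam) := by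
    intro b hbu
    have hSb := huS hbu
    set x := (∫⁻ q in B b, h q) / lam with hx
    have hx_le : x ≤ I / lam :=
      ENNReal.div_le_div_right (lintegral_mono_set (hQsub b hSb)) lam
    have hx_ne_top : x ≠ ⊤ := ne_top_of_le_ne_top hIdiv_ne_top hx_le
    have hx_ne_zero : x ≠ 0 := by
      rw [hx]
      simp only [ne_eq, ENNReal.div_eq_zero_iff, not_or]
      exact ⟨hx_pos b hbu, hltop⟩
    have h2 : (volume (B b)) ^ (1-β) ≤ x := by
      rw [hx, ENNReal.le_div_iff_mul_le (Or.inl hl0) (Or.inl hltop), mul_comm]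
      exact (hint b hSb).le
    calc volume (B b) = ((volume (B b)) ^ (1-β)) ^ ((1:ℝ)/(1-β)) := by
          rw [← ENNReal.rpow_mul, mul_one_div, div_self hβ'.ne', ENNReal.rpow_one]
      _ ≤ x ^ ((1:ℝ)/(1-β)) := ENNReal.rpow_le_rpow h2 (by positivity)
      _ = x ^ ((1:ℝ)/(1-β) - 1) * x := by
          nth_rewrite 3 [← ENNReal.rpow_one x]
          rw [← ENNReal.rpow_add _ _ hx_ne_zero hx_ne_top]
          congr 1
          ring
      _ ≤ (I/lam) ^ ((1:ℝ)/(1-β) - 1) * x :=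
          mul_le_mul_left (ENNReal.rpow_le_rpow hx_le (by linarith [hp1])) x
  have hsum_int : ∑' b : u, (∫⁻ q in B b, h q) ≤ I := by
    rw [← lintegral_iUnion (fun b : u => hBm b)
      (fun i j hij => hdisj i.2 j.2 (fun e => hij (Subtype.ext e)))]
    exact lintegral_mono_set (Set.iUnion_subset fun b => hQsub b (huS b.2))
  calc volume S ≤ volume (⋃ b ∈ u, D b) := measure_mono hScov
    _ ≤ ∑' b : u, volume (D b) := measure_biUnion_le volume hu_cnt D
    _ = ∑' b : u, ENNReal.ofReal (5 ^ n * 50) * volume (B b) := by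
        refine tsum_congr fun b => ?_
        exact enlargement_volume hn _ _ _ (hRpos b (huS b.2))
    _ = ENNReal.ofReal (5 ^ n * 50) * ∑' b : u, volume (B b) := ENNReal.tsum_mul_left
    _ ≤ ENNReal.ofReal (5 ^ n * 50) *
        ∑' b : u, (I/lam) ^ ((1:ℝ)/(1-β) - 1) * ((∫⁻ q in B b, h q) / lam) := by
        gcongr with b
        exact hterm b b.2
    _ = ENNReal.ofReal (5 ^ n * 50) *
        ((I/lam) ^ ((1:ℝ)/(1-β) - 1) * ((∑' b : u, ∫⁻ q in B b, h q) / lam)) := by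
        rw [ENNReal.tsum_mul_left]
        congr 1
        simp only [div_eq_mul_inv, ENNReal.tsum_mul_right]
    _ ≤ ENNReal.ofReal (5 ^ n * 50) * ((I/lam) ^ ((1:ℝ)/(1-β) - 1) * (I / lam)) := by
        gcongr
    _ = ENNReal.ofReal (5 ^ n * 50) * (I/lam) ^ ((1:ℝ)/(1-β)) := by
        congr 1
        have hIl_ne_zero : I / lam ≠ 0 := by
          simp only [ne_eq, ENNReal.div_eq_zero_iff, not_or]
          exact ⟨hI0, hltop⟩
        nth_rewrite 2 [← ENNReal.rpow_one (I/lam)]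
        rw [← ENNReal.rpow_add _ _ hIl_ne_zero hIdiv_ne_top]
        congr 1
        ring

-- integral of t^(-r) over (0,s), 0 ≤ r < 1
lemma lint_Ioo_rpow {r s : ℝ} (hr0 : 0 ≤ r) (hr1 : r < 1) (hs : 0 < s) :
    ∫⁻ t in Ioo (0:ℝ) s, ENNReal.ofReal (t ^ (-r)) = ENNReal.ofReal (s ^ (1-r) / (1-r)) := by
  have h1 : (volume : Measure ℝ).restrict (Ioo 0 s) = volume.restrict (Ioc 0 s) := by
    refine Measure.restrict_congr_set Ioo_ae_eq_Ioc
  rw [h1]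
  have hint : IntegrableOn (fun t : ℝ => t ^ (-r)) (Ioc 0 s) := by
    have := intervalIntegral.intervalIntegrable_rpow' (a := 0) (b := s) (r := -r) (by linarith)
    rw [intervalIntegrable_iff, uIoc_of_le hs.le] at this
    exact this
  rw [← ofReal_integral_eq_lintegral_ofReal hint]
  · congr 1
    have := integral_rpow (a := 0) (b := s) (r := -r) (Or.inl (by linarith))
    rw [intervalIntegral.integral_of_le hs.le] at this
    rw [this, Real.zero_rpow (by linarith), sub_zero]
    ring_nf
  · filter_upwards [ae_restrict_mem measurableSet_Ioc] with t ht
    exact (Real.rpow_pos_of_pos ht.1 _).le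

lemma lint_Ioi_rpow {γ s : ℝ} (hγ : 1 < γ) (hs : 0 < s) :
    ∫⁻ t in Ioi s, ENNReal.ofReal (t ^ (-γ)) = ENNReal.ofReal (s ^ (1-γ) / (γ-1)) := by
  have hint : IntegrableOn (fun t : ℝ => t ^ (-γ)) (Ioi s) :=
    integrableOn_Ioi_rpow_of_lt (by linarith) hs
  rw [← ofReal_integral_eq_lintegral_ofReal hint]
  · congr 1
    rw [integral_Ioi_rpow_of_lt (by linarith) hs]
    rw [show -γ + 1 = 1 - γ by ring]
    rw [div_eq_div_iff (by linarith) (by linarith)]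
    ring
  · filter_upwards [ae_restrict_mem measurableSet_Ioi] with t ht
    exact (Real.rpow_pos_of_pos (hs.trans ht) _).le

lemma real_min_le_rpow {v x β : ℝ} (hv : 0 ≤ v) (hx : 0 ≤ x) (hβ0 : 0 ≤ β) (hβ1 : β ≤ 1) :
    min v x ≤ v ^ (1-β) * x ^ β := by
  rcases eq_or_lt_of_le (le_min hv hx) with hm | hm
  · rw [← hm]
    positivity
  · calc min v x = (min v x) ^ (1-β) * (min v x) ^ β := by
          rw [← Real.rpow_add hm, sub_add_cancel, Real.rpow_one]
      _ ≤ v ^ (1-β) * x ^ β := by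
          apply mul_le_mul
          · exact Real.rpow_le_rpow hm.le (min_le_left _ _) (by linarith)
          · exact Real.rpow_le_rpow hm.le (min_le_right _ _) hβ0
          · positivity
          · positivity

/-- Lemma A: pointwise bound for the maximal operator applied to the truncated function. -/
lemma truncated_bound {n : ℕ} (hn : 0 < n) {β γ a s : ℝ}
    (hβ0 : 0 ≤ β) (hβ1 : β ≤ 1) (hγ0 : 0 < γ) (hγβ : γ * β < 1) (ha : 0 ≤ a) (hs : 0 < s)
    {Q₀ Q : Set (EuclideanSpace ℝ (Fin n) × ℝ)}
    (hQ : IsParabolicCylinder n Q) (hQsub : Q ⊆ Q₀)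
    {g : EuclideanSpace ℝ (Fin n) × ℝ → ℝ} (hg : Measurable g)
    (hA : ∀ t : ℝ, 0 < t → volume {p ∈ Q₀ | t < |g p|} ≤ ENNReal.ofReal (a ^ γ * t ^ (-γ))) :
    (volume Q) ^ β * ((volume Q)⁻¹ * ∫⁻ q in Q, ENNReal.ofReal (min |g q| s))
      ≤ ENNReal.ofReal (a ^ (γ*β) * s ^ (1 - γ*β) / (1 - γ*β)) := by
  have hγβ0 : 0 ≤ γ * β := by positivity
  obtain ⟨x₀, t₀, R, hR, rfl⟩ := hQ
  set Q := parabolicCylinder n x₀ t₀ R with hQdef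
  have hQm : MeasurableSet Q := pc_measurable _ _ _
  have hV0 : volume Q ≠ 0 := (volume_pc_pos hn _ _ _ hR).ne'
  have hVtop : volume Q ≠ ⊤ := volume_pc_ne_top hn _ _ _ hR
  set v := (volume Q).toReal with hvdef
  have hv : 0 < v := ENNReal.toReal_pos hV0 hVtop
  have hVeq : volume Q = ENNReal.ofReal v := (ENNReal.ofReal_toReal hVtop).symm
  -- layer cake
  have hlc : ∫⁻ q in Q, ENNReal.ofReal (min |g q| s)
      = ∫⁻ t in Ioi (0:ℝ), (volume.restrict Q) {p | t < min |g p| s} := by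
    exact lintegral_eq_lintegral_meas_lt (volume.restrict Q)
      (Filter.Eventually.of_forall fun q => le_min (abs_nonneg _) hs.le)
      ((hg.abs.min measurable_const).aemeasurable)
  have hbound : ∫⁻ t in Ioi (0:ℝ), (volume.restrict Q) {p | t < min |g p| s}
      ≤ ∫⁻ t in Ioi (0:ℝ),
          (Ioo (0:ℝ) s).indicator
            (fun t => ENNReal.ofReal (v ^ (1-β) * a ^ (γ*β)) * ENNReal.ofReal (t ^ (-(γ*β)))) t := by
    apply setLIntegral_mono' measurableSet_Ioi
    intro t ht
    rw [Set.mem_Ioi] at ht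
    rcases lt_or_ge t s with hts | hts
    · rw [Set.indicator_of_mem (by exact ⟨ht, hts⟩ : t ∈ Ioo 0 s)]
      rw [Measure.restrict_apply' hQm]
      have m1 : volume ({p | t < min |g p| s} ∩ Q) ≤ ENNReal.ofReal v := by
        rw [← hVeq]
        exact measure_mono Set.inter_subset_right
      have m2 : volume ({p | t < min |g p| s} ∩ Q) ≤ ENNReal.ofReal (a ^ γ * t ^ (-γ)) := by
        refine le_trans (measure_mono ?_) (hA t ht)
        rintro p ⟨hp1, hp2⟩
        exact ⟨hQsub hp2, lt_of_lt_of_le hp1 (min_le_left _ _)⟩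
      calc volume ({p | t < min |g p| s} ∩ Q)
          ≤ min (ENNReal.ofReal v) (ENNReal.ofReal (a ^ γ * t ^ (-γ))) := le_min m1 m2
        _ = ENNReal.ofReal (min v (a ^ γ * t ^ (-γ))) := by
            rcases le_total v (a ^ γ * t ^ (-γ)) with hc | hc
            · rw [min_eq_left hc, min_eq_left (ENNReal.ofReal_le_ofReal hc)]
            · rw [min_eq_right hc, min_eq_right (ENNReal.ofReal_le_ofReal hc)]
        _ ≤ ENNReal.ofReal (v ^ (1-β) * a ^ (γ*β)) * ENNReal.ofReal (t ^ (-(γ*β))) := by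
            rw [← ENNReal.ofReal_mul (by positivity)]
            apply ENNReal.ofReal_le_ofReal
            calc min v (a ^ γ * t ^ (-γ))
                ≤ v ^ (1-β) * (a ^ γ * t ^ (-γ)) ^ β := real_min_le_rpow hv.le (by positivity) hβ0 hβ1
              _ = v ^ (1-β) * a ^ (γ*β) * t ^ (-(γ*β)) := by
                  rw [Real.mul_rpow (by positivity) (by positivity),
                    ← Real.rpow_mul ha, ← Real.rpow_mul ht.le]
                  ring_nf
    · rw [Set.indicator_of_notMem (by simp [Set.mem_Ioo]; intro _; linarith)]
      have : {p | t < min |g p| s} = ∅ := by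
        ext p
        simp only [Set.mem_setOf_eq, Set.mem_empty_iff_false, iff_false, not_lt]
        exact le_trans (min_le_right _ _) hts
      rw [Measure.restrict_apply' hQm, this]
      simp
  have hcomp : ∫⁻ t in Ioi (0:ℝ),
      (Ioo (0:ℝ) s).indicator
        (fun t => ENNReal.ofReal (v ^ (1-β) * a ^ (γ*β)) * ENNReal.ofReal (t ^ (-(γ*β)))) t
      = ENNReal.ofReal (v ^ (1-β) * a ^ (γ*β)) * ENNReal.ofReal (s ^ (1-γ*β) / (1-γ*β)) := by
    rw [lintegral_indicator measurableSet_Ioo, Measure.restrict_restrict measurableSet_Ioo,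
      show Ioo (0:ℝ) s ∩ Ioi 0 = Ioo 0 s by
        rw [Set.inter_eq_self_of_subset_left]
        exact fun t ht => ht.1]
    rw [lintegral_const_mul' _ _ ENNReal.ofReal_ne_top, lint_Ioo_rpow hγβ0 hγβ hs]
  calc (volume Q) ^ β * ((volume Q)⁻¹ * ∫⁻ q in Q, ENNReal.ofReal (min |g q| s))
      ≤ (volume Q) ^ β * ((volume Q)⁻¹ *
        (ENNReal.ofReal (v ^ (1-β) * a ^ (γ*β)) * ENNReal.ofReal (s ^ (1-γ*β) / (1-γ*β)))) := by
        gcongr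
        rw [hlc, ← hcomp]
        exact hbound
    _ = ENNReal.ofReal (a ^ (γ*β) * s ^ (1 - γ*β) / (1 - γ*β)) := by
        rw [hVeq, ENNReal.ofReal_rpow_of_pos hv, ← ENNReal.ofReal_inv_of_pos hv,
          ← ENNReal.ofReal_mul (by positivity), ← ENNReal.ofReal_mul (by positivity),
          ← ENNReal.ofReal_mul (by positivity)]
        congr 1
        rw [show v ^ β * (v⁻¹ * (v ^ (1-β) * a ^ (γ*β) * (s ^ (1-γ*β) / (1-γ*β))))
            = (v ^ β * v ^ (1-β) * v⁻¹) * (a ^ (γ*β) * s ^ (1-γ*β) / (1-γ*β)) from by ring]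
        rw [← Real.rpow_add hv, show β + (1-β) = 1 by ring, Real.rpow_one,
          mul_inv_cancel₀ hv.ne', one_mul]

/-- Lemma B: `L¹` bound for the tail of a weak-`L^γ` function. -/
lemma tail_bound {n : ℕ} {γ a s : ℝ} (hγ : 1 < γ) (ha : 0 ≤ a) (hs : 0 < s)
    {Q₀ : Set (EuclideanSpace ℝ (Fin n) × ℝ)} (hQ₀m : MeasurableSet Q₀)
    {g : EuclideanSpace ℝ (Fin n) × ℝ → ℝ} (hg : Measurable g)
    (hA : ∀ t : ℝ, 0 < t → volume {p ∈ Q₀ | t < |g p|} ≤ ENNReal.ofReal (a ^ γ * t ^ (-γ))) :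
    ∫⁻ q in Q₀, ENNReal.ofReal (if s < |g q| then |g q| else 0)
      ≤ ENNReal.ofReal ((γ/(γ-1)) * a ^ γ * s ^ (1-γ)) := by
  set f : EuclideanSpace ℝ (Fin n) × ℝ → ℝ := fun q => if s < |g q| then |g q| else 0 with hf
  have hfm : Measurable f := Measurable.ite (measurableSet_lt measurable_const hg.abs)
    hg.abs measurable_const
  have hlc : ∫⁻ q in Q₀, ENNReal.ofReal (f q)
      = ∫⁻ t in Ioi (0:ℝ), (volume.restrict Q₀) {p | t < f p} :=
    lintegral_eq_lintegral_meas_lt (volume.restrict Q₀)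
      (Filter.Eventually.of_forall fun q => by
        by_cases h : s < |g q| <;> simp [hf, h, abs_nonneg])
      hfm.aemeasurable
  have hptwise : ∀ t : ℝ, 0 < t →
      (volume.restrict Q₀) {p | t < f p} ≤ ENNReal.ofReal (a ^ γ * (max s t) ^ (-γ)) := by
    intro t ht
    rw [Measure.restrict_apply' hQ₀m]
    refine le_trans (measure_mono ?_) (hA (max s t) (lt_of_lt_of_le hs (le_max_left _ _)))
    rintro p ⟨hp1, hp2⟩
    refine ⟨hp2, ?_⟩
    simp only [Set.mem_setOf_eq, hf] at hp1
    split_ifs at hp1 with h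
    · exact max_lt h hp1
    · linarith
  calc ∫⁻ q in Q₀, ENNReal.ofReal (f q)
      ≤ ∫⁻ t in Ioi (0:ℝ), ENNReal.ofReal (a ^ γ * (max s t) ^ (-γ)) := by
        rw [hlc]
        exact setLIntegral_mono' measurableSet_Ioi fun t ht => hptwise t ht
    _ = (∫⁻ t in Ioc (0:ℝ) s, ENNReal.ofReal (a ^ γ * (max s t) ^ (-γ)))
        + ∫⁻ t in Ioi s, ENNReal.ofReal (a ^ γ * (max s t) ^ (-γ)) := by
        rw [← Set.Ioc_union_Ioi_eq_Ioi hs.le, lintegral_union measurableSet_Ioi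
          (Set.Ioc_disjoint_Ioi le_rfl)]
    _ ≤ ENNReal.ofReal (a ^ γ * s ^ (-γ) * s) + ENNReal.ofReal (a ^ γ) * ENNReal.ofReal (s ^ (1-γ)/(γ-1)) := by
        gcongr
        · refine le_of_eq ?_
          calc ∫⁻ t in Ioc (0:ℝ) s, ENNReal.ofReal (a ^ γ * (max s t) ^ (-γ))
              = ∫⁻ _ in Ioc (0:ℝ) s, ENNReal.ofReal (a ^ γ * s ^ (-γ)) := by
                  refine setLIntegral_congr_fun measurableSet_Ioc (fun t ht => ?_)
                  rw [max_eq_left ht.2]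
            _ = ENNReal.ofReal (a ^ γ * s ^ (-γ)) * ENNReal.ofReal s := by
                  rw [setLIntegral_const, Real.volume_Ioc, sub_zero]
            _ = ENNReal.ofReal (a ^ γ * s ^ (-γ) * s) := by
                  rw [← ENNReal.ofReal_mul (by positivity)]
        · refine le_of_eq ?_
          calc ∫⁻ t in Ioi s, ENNReal.ofReal (a ^ γ * (max s t) ^ (-γ))
              = ∫⁻ t in Ioi s, ENNReal.ofReal (a ^ γ) * ENNReal.ofReal (t ^ (-γ)) := by
                  refine setLIntegral_congr_fun measurableSet_Ioi (fun t ht => ?_)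
                  rw [max_eq_right (le_of_lt ht), ENNReal.ofReal_mul (by positivity)]
            _ = ENNReal.ofReal (a ^ γ) * ENNReal.ofReal (s ^ (1-γ)/(γ-1)) := by
                  rw [lintegral_const_mul' _ _ ENNReal.ofReal_ne_top, lint_Ioi_rpow hγ hs]
    _ ≤ ENNReal.ofReal ((γ/(γ-1)) * a ^ γ * s ^ (1-γ)) := by
        rw [← ENNReal.ofReal_mul (by positivity), ← ENNReal.ofReal_add (by positivity)
          (mul_nonneg (by positivity) (div_nonneg (by positivity) (by linarith)))]
        apply ENNReal.ofReal_le_ofReal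
        have hkey : a ^ γ * s ^ (-γ) * s = a ^ γ * s ^ (1-γ) := by
          rw [mul_assoc]
          congr 1
          nth_rewrite 2 [← Real.rpow_one s]
          rw [← Real.rpow_add hs]
          congr 1
          ring
        rw [hkey]
        have h1 : γ - 1 ≠ 0 := by intro h; linarith
        apply le_of_eq
        field_simp
        ring

lemma key_real {γ β a l : ℝ} (hγ : 1 < γ) (hβ0 : 0 ≤ β) (hβ1 : β < 1) (hγβ : γ * β < 1)
    (ha : 0 < a) (hl : 0 < l) :
    l ^ (γ/(1-γ*β)) * ((γ/(γ-1)) * a ^ γ *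
        ((((1-γ*β) * (l/2) / a ^ (γ*β)) ^ ((1:ℝ)/(1-γ*β))) ^ (1-γ)) / (l/2)) ^ ((1:ℝ)/(1-β))
      = ((γ/(γ-1)) ^ ((1:ℝ)/(1-β)) * (1-γ*β) ^ (((1-γ)/(1-γ*β)) * ((1:ℝ)/(1-β)))
          * 2 ^ (γ/(1-γ*β))) * a ^ (γ/(1-γ*β)) := by
  have hr : (0:ℝ) < 1 - γ*β := by linarith
  have hβ' : (0:ℝ) < 1 - β := by linarith
  have hC : (0:ℝ) < γ/(γ-1) := div_pos (by linarith) (by linarith)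
  have hLpos : 0 < l/2 := by positivity
  set r : ℝ := 1 - γ*β with hrdef
  set C : ℝ := γ/(γ-1) with hCdef
  set L : ℝ := l/2 with hLdef
  set m : ℝ := (1-γ)/r with hm
  set p' : ℝ := (1:ℝ)/(1-β) with hp'
  set q : ℝ := γ/r with hq
  have hL0 : L ≠ 0 := hLpos.ne'
  have hbase : 0 < r * L / a ^ (γ*β) := by positivity
  -- step 1
  have step1 : ((r * L / a ^ (γ*β)) ^ ((1:ℝ)/r)) ^ (1-γ) = (r * L / a ^ (γ*β)) ^ m := by
    rw [← Real.rpow_mul hbase.le, hm]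
    congr 1
    field_simp
  -- step 2 : X^m expanded
  have step2 : (r * L / a ^ (γ*β)) ^ m = r ^ m * L ^ m / a ^ (γ*β*m) := by
    rw [Real.div_rpow (by positivity) (by positivity), Real.mul_rpow hr.le hLpos.le,
      ← Real.rpow_mul ha.le]
  -- step 3 : the inner base
  have step3 : C * a ^ γ * (r ^ m * L ^ m / a ^ (γ*β*m)) / L
      = C * r ^ m * (L ^ (m-1) * a ^ (γ - γ*β*m)) := by
    rw [Real.rpow_sub hLpos, Real.rpow_sub ha, Real.rpow_one]
    have h1 : a ^ (γ*β*m) ≠ 0 := (Real.rpow_pos_of_pos ha _).ne'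
    field_simp
  -- step 4 : distribute the outer exponent
  have step4 : (C * r ^ m * (L ^ (m-1) * a ^ (γ - γ*β*m))) ^ p'
      = C ^ p' * (r ^ m) ^ p' * ((L ^ (m-1)) ^ p' * (a ^ (γ - γ*β*m)) ^ p') := by
    rw [Real.mul_rpow (by positivity) (by positivity),
      Real.mul_rpow (by positivity) (by positivity),
      Real.mul_rpow (by positivity) (by positivity)]
  -- exponent identities
  have e1 : (m-1) * p' = -q := by
    rw [hm, hp', hq, hrdef]
    have hr1 : (1:ℝ) - γ*β ≠ 0 := (by linarith : (0:ℝ) < 1 - γ*β).ne'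
    have hb1 : (1:ℝ) - β ≠ 0 := hβ'.ne'
    field_simp
    ring
  have e2 : (γ - γ*β*m) * p' = q := by
    rw [hm, hp', hq, hrdef]
    have hr1 : (1:ℝ) - γ*β ≠ 0 := (by linarith : (0:ℝ) < 1 - γ*β).ne'
    have hb1 : (1:ℝ) - β ≠ 0 := hβ'.ne'
    field_simp
    ring
  have step5a : (L ^ (m-1)) ^ p' = L ^ (-q) := by
    rw [← Real.rpow_mul hLpos.le, e1]
  have step5b : (a ^ (γ - γ*β*m)) ^ p' = a ^ q := by
    rw [← Real.rpow_mul ha.le, e2]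
  have step5c : (r ^ m) ^ p' = r ^ (m * p') := by
    rw [← Real.rpow_mul hr.le]
  -- L ^ (-q) = l ^ (-q) * 2 ^ q
  have step6 : L ^ (-q) = l ^ (-q) * 2 ^ q := by
    rw [hLdef, div_eq_mul_inv, Real.mul_rpow hl.le (by norm_num),
      ← Real.rpow_neg_one (2:ℝ), ← Real.rpow_mul (by norm_num : (0:ℝ) ≤ 2)]
    congr 1
    ring
  have hll : l ^ q * l ^ (-q) = 1 := by
    rw [← Real.rpow_add hl]
    simp
  calc l ^ q * (C * a ^ γ * ((r * L / a ^ (γ*β)) ^ ((1:ℝ)/r)) ^ (1-γ) / L) ^ p'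
      = l ^ q * (C * r ^ m * (L ^ (m-1) * a ^ (γ - γ*β*m))) ^ p' := by
        rw [step1, step2, step3]
    _ = l ^ q * (C ^ p' * r ^ (m * p') * ((l ^ (-q) * 2 ^ q) * a ^ q)) := by
        rw [step4, step5a, step5b, step5c, step6]
    _ = (C ^ p' * r ^ (m * p') * 2 ^ q) * a ^ q := by
        linear_combination (C ^ p' * r ^ (m * p') * (2 ^ q * a ^ q)) * hll

/-- Marcinkiewicz space boundedness of the restricted fractional maximal
operator: for `α ∈ [0,N)`, `γ > 1` with `αγ < N` (`N = n + 2`) there exists `c = c(α,γ,n)`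
such that on every parabolic cylinder `Q`,
`‖M*_{α,Q}(g)‖_{M^{Nγ/(N-αγ)}(Q)} ≤ c ‖g‖_{M^γ(Q)}`. -/
theorem maximal_marcinkiewicz_bound (n : ℕ) (hn : 2 ≤ n) (α γ : ℝ)
    (hα0 : 0 ≤ α) (hαN : α < (n : ℝ) + 2) (hγ : 1 < γ) (hαγ : α * γ < (n : ℝ) + 2) :
    ∃ c : ℝ, 0 < c ∧
      ∀ Q : Set (EuclideanSpace ℝ (Fin n) × ℝ), IsParabolicCylinder n Q →
      ∀ g : EuclideanSpace ℝ (Fin n) × ℝ → ℝ, Measurable g →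
        marcinkiewiczNormE Q (fun p => ENNReal.ofReal |g p|) γ < ⊤ →
        marcinkiewiczNormE Q (parMaximal n α Q g)
            (((n : ℝ) + 2) * γ / (((n : ℝ) + 2) - α * γ)) ≤
          ENNReal.ofReal c * marcinkiewiczNormE Q (fun p => ENNReal.ofReal |g p|) γ := by
  have hn0 : 0 < n := by omega
  have hNpos : (0:ℝ) < (n:ℝ) + 2 := by positivity
  have hγ0 : (0:ℝ) < γ := by linarith
  set β : ℝ := α / ((n:ℝ) + 2) with hβdef
  have hβ0 : 0 ≤ β := by positivity
  have hβ1 : β < 1 := by rw [hβdef, div_lt_one hNpos]; exact hαN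
  have hγβ : γ * β < 1 := by
    rw [hβdef, mul_div_assoc']
    rw [div_lt_one hNpos]
    linarith [hαγ]
  have hβ' : (0:ℝ) < 1 - β := by linarith
  have hC : (0:ℝ) < γ/(γ-1) := div_pos (by linarith) (by linarith)
  have hr : (0:ℝ) < 1 - γ * β := by linarith
  have hqpos : (0:ℝ) < γ / (1 - γ * β) := div_pos hγ0 hr
  have hq' : ((n:ℝ) + 2) * γ / (((n:ℝ) + 2) - α * γ) = γ / (1 - γ * β) := by
    have hr' := hr
    rw [hβdef] at hr'
    have h2 : ((n:ℝ)+2) - α*γ ≠ 0 := by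
      have : 0 < ((n:ℝ)+2) - α*γ := by linarith
      exact this.ne'
    rw [hβdef, div_eq_div_iff h2 hr'.ne']
    field_simp
  set K : ℝ := 5 ^ n * 50 * ((γ/(γ-1)) ^ ((1:ℝ)/(1-β)) * (1-γ*β) ^ (((1-γ)/(1-γ*β)) * ((1:ℝ)/(1-β)))
      * 2 ^ (γ/(1-γ*β))) with hK
  have hKpos : 0 < K := by positivity
  refine ⟨K ^ ((1:ℝ)/(γ/(1-γ*β))), by positivity, ?_⟩
  intro Q₀ hQ₀ g hg hfin
  have hQ₀m : MeasurableSet Q₀ := by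
    obtain ⟨x, t, R, hR, rfl⟩ := hQ₀; exact pc_measurable _ _ _
  have hQ₀top : volume Q₀ ≠ ⊤ := by
    obtain ⟨x, t, R, hR, rfl⟩ := hQ₀; exact volume_pc_ne_top hn0 _ _ _ hR
  set A := marcinkiewiczNormE Q₀ (fun p => ENNReal.ofReal |g p|) γ with hAdef
  rw [hq']
  rcases eq_or_ne A 0 with hA0 | hA0
  · -- degenerate case : g vanishes a.e. on Q₀
    have hsup0 : (⨆ (l:ℝ) (_ : 0 < l), ENNReal.ofReal (l ^ γ) *
        volume {p ∈ Q₀ | ENNReal.ofReal l < ENNReal.ofReal |g p|}) = 0 := by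
      have h := hA0
      rw [hAdef, marcinkiewiczNormE] at h
      rcases ENNReal.rpow_eq_zero_iff.mp h with ⟨h1, _⟩ | ⟨_, h2⟩
      · exact h1
      · exact absurd h2 (by positivity : (0:ℝ) < 1/γ).asymm
    have hvol0 : ∀ t : ℝ, 0 < t → volume {p ∈ Q₀ | t < |g p|} = 0 := by
      intro t ht
      have hterm : ENNReal.ofReal (t ^ γ) *
          volume {p ∈ Q₀ | ENNReal.ofReal t < ENNReal.ofReal |g p|} ≤ 0 := by
        rw [← hsup0]
        exact le_iSup₂ (f := fun (l:ℝ) (_ : 0 < l) => ENNReal.ofReal (l ^ γ) *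
          volume {p ∈ Q₀ | ENNReal.ofReal l < ENNReal.ofReal |g p|}) t ht
      have hset : {p ∈ Q₀ | ENNReal.ofReal t < ENNReal.ofReal |g p|} = {p ∈ Q₀ | t < |g p|} := by
        ext p
        simp [ENNReal.ofReal_lt_ofReal_iff_of_nonneg ht.le]
      rw [hset] at hterm
      have := le_antisymm hterm (zero_le)
      rcases mul_eq_zero.mp this with h | h
      · exact absurd h (by simp [ENNReal.ofReal_eq_zero]; positivity)
      · exact h
    have hgz : volume {p ∈ Q₀ | 0 < |g p|} = 0 := by
      have hcover : {p ∈ Q₀ | 0 < |g p|} ⊆ ⋃ k : ℕ, {p ∈ Q₀ | 1/((k:ℝ)+1) < |g p|} := by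
        rintro p ⟨hp1, hp2⟩
        obtain ⟨k, hk⟩ := exists_nat_one_div_lt hp2
        exact Set.mem_iUnion.mpr ⟨k, hp1, hk⟩
      exact measure_mono_null hcover
        (measure_iUnion_null fun k => hvol0 _ (by positivity))
    have hint0 : ∫⁻ q in Q₀, ENNReal.ofReal |g q| = 0 := by
      have hae : ∀ᵐ q ∂(volume.restrict Q₀), ENNReal.ofReal |g q| = 0 := by
        rw [ae_restrict_iff' hQ₀m]
        rw [ae_iff]
        refine measure_mono_null ?_ hgz
        intro q hq
        simp only [Set.mem_setOf_eq, not_forall] at hq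
        obtain ⟨hq1, hq2⟩ := hq
        refine ⟨hq1, ?_⟩
        rcases lt_or_ge 0 |g q| with h | h
        · exact h
        · exact absurd (ENNReal.ofReal_eq_zero.mpr h) hq2
      rw [lintegral_congr_ae hae, lintegral_zero]
    have hM0 : ∀ p, parMaximal n α Q₀ g p = 0 := by
      intro p
      rw [parMaximal]
      refine le_antisymm ?_ (zero_le)
      refine iSup_le fun Q => iSup_le fun hQc => iSup_le fun hsub => iSup_le fun hp => ?_
      have h0 : ∫⁻ q in Q, ENNReal.ofReal |g q| = 0 :=
        le_antisymm (hint0 ▸ lintegral_mono_set hsub) (zero_le)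
      rw [h0]
      simp
    rw [marcinkiewiczNormE]
    have hzero : (⨆ (l:ℝ) (_ : 0 < l), ENNReal.ofReal (l ^ (γ/(1-γ*β))) *
        volume {p ∈ Q₀ | ENNReal.ofReal l < parMaximal n α Q₀ g p}) = 0 := by
      refine le_antisymm (iSup_le fun l => iSup_le fun hl => ?_) (zero_le)
      have : {p ∈ Q₀ | ENNReal.ofReal l < parMaximal n α Q₀ g p} = ∅ := by
        ext p
        simp [hM0 p]
      rw [this]
      simp
    rw [hzero, ENNReal.zero_rpow_of_pos (by positivity)]
    exact zero_le
  · -- main case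
    have hAtop : A ≠ ⊤ := hfin.ne
    set a := A.toReal with hadef
    have hapos : 0 < a := ENNReal.toReal_pos hA0 hAtop
    have hAeq : A = ENNReal.ofReal a := (ENNReal.ofReal_toReal hAtop).symm
    have hWk : ∀ t : ℝ, 0 < t →
        volume {p ∈ Q₀ | t < |g p|} ≤ ENNReal.ofReal (a ^ γ * t ^ (-γ)) := by
      intro t ht
      have hAγ : A ^ γ = ENNReal.ofReal (a ^ γ) := by
        rw [hAeq, ENNReal.ofReal_rpow_of_pos hapos]
      have hterm : ENNReal.ofReal (t ^ γ) *
          volume {p ∈ Q₀ | ENNReal.ofReal t < ENNReal.ofReal |g p|} ≤ A ^ γ := by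
        rw [hAdef, marcinkiewiczNormE, ← ENNReal.rpow_mul, one_div,
          inv_mul_cancel₀ hγ0.ne', ENNReal.rpow_one]
        exact le_iSup₂ (f := fun (l:ℝ) (_ : 0 < l) => ENNReal.ofReal (l ^ γ) *
          volume {p ∈ Q₀ | ENNReal.ofReal l < ENNReal.ofReal |g p|}) t ht
      have hset : {p ∈ Q₀ | ENNReal.ofReal t < ENNReal.ofReal |g p|} = {p ∈ Q₀ | t < |g p|} := by
        ext p
        simp [ENNReal.ofReal_lt_ofReal_iff_of_nonneg ht.le]
      rw [hset, hAγ] at hterm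
      have hstep : volume {p ∈ Q₀ | t < |g p|}
          ≤ ENNReal.ofReal (a ^ γ) / ENNReal.ofReal (t ^ γ) := by
        rw [ENNReal.le_div_iff_mul_le
          (Or.inl (ENNReal.ofReal_pos.mpr (Real.rpow_pos_of_pos ht γ)).ne')
          (Or.inl ENNReal.ofReal_ne_top), mul_comm]
        exact hterm
      refine le_trans hstep (le_of_eq ?_)
      rw [← ENNReal.ofReal_div_of_pos (Real.rpow_pos_of_pos ht γ), Real.rpow_neg ht.le,
        div_eq_mul_inv]
    rw [marcinkiewiczNormE]
    have hmain : ∀ l : ℝ, 0 < l →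
        ENNReal.ofReal (l ^ (γ/(1-γ*β))) *
          volume {p ∈ Q₀ | ENNReal.ofReal l < parMaximal n α Q₀ g p}
        ≤ ENNReal.ofReal (K * a ^ (γ/(1-γ*β))) := by
      intro l hl
      set s : ℝ := ((1-γ*β) * (l/2) / a ^ (γ*β)) ^ ((1:ℝ)/(1-γ*β)) with hsdef
      have hspos : 0 < s := by positivity
      set f : EuclideanSpace ℝ (Fin n) × ℝ → ℝ := fun q => if s < |g q| then |g q| else 0
        with hfdef
      have hf0 : ∀ q, 0 ≤ f q := by
        intro q
        rw [hfdef]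
        dsimp only
        split_ifs
        · exact abs_nonneg _
        · exact le_rfl
      have hfm : Measurable f :=
        Measurable.ite (measurableSet_lt measurable_const hg.abs) hg.abs measurable_const
      have hhalfeq : a ^ (γ*β) * s ^ (1-γ*β) / (1-γ*β) = l/2 := by
        have h1 : s ^ (1-γ*β) = (1-γ*β) * (l/2) / a ^ (γ*β) := by
          rw [hsdef, ← Real.rpow_mul (by positivity), one_div_mul_cancel hr.ne',
            Real.rpow_one]
        rw [h1]
        have h2 : a ^ (γ*β) ≠ 0 := (Real.rpow_pos_of_pos hapos _).ne'
        field_simp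
      -- subset claim
      have hsubset : {p ∈ Q₀ | ENNReal.ofReal l < parMaximal n α Q₀ g p}
          ⊆ {p | ∃ Q, IsParabolicCylinder n Q ∧ Q ⊆ Q₀ ∧ p ∈ Q ∧
              ENNReal.ofReal (l/2) * (volume Q) ^ (1-β) < ∫⁻ q in Q, ENNReal.ofReal (f q)} := by
        rintro p ⟨hpQ₀, hpl⟩
        rw [parMaximal] at hpl
        simp only [lt_iSup_iff] at hpl
        obtain ⟨Q, hQc, hQsub, hpQ, hlt⟩ := hpl
        rw [← hβdef] at hlt
        have hV0 : volume Q ≠ 0 := by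
          obtain ⟨x, t, R, hR, rfl⟩ := hQc; exact (volume_pc_pos hn0 _ _ _ hR).ne'
        have hVtop : volume Q ≠ ⊤ := by
          obtain ⟨x, t, R, hR, rfl⟩ := hQc; exact volume_pc_ne_top hn0 _ _ _ hR
        have hsplit : ∫⁻ q in Q, ENNReal.ofReal |g q|
            ≤ (∫⁻ q in Q, ENNReal.ofReal (min |g q| s)) + ∫⁻ q in Q, ENNReal.ofReal (f q) := by
          rw [← lintegral_add_left ((hg.abs.min measurable_const).ennreal_ofReal)]
          refine lintegral_mono fun q => ?_
          have habs : |g q| ≤ min |g q| s + f q := by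
            rw [hfdef]
            dsimp only
            split_ifs with h
            · exact le_add_of_nonneg_left (le_min (abs_nonneg _) hspos.le)
            · rw [min_eq_left (not_lt.mp h), add_zero]
          calc ENNReal.ofReal |g q| ≤ ENNReal.ofReal (min |g q| s + f q) :=
                ENNReal.ofReal_le_ofReal habs
            _ = ENNReal.ofReal (min |g q| s) + ENNReal.ofReal (f q) :=
                ENNReal.ofReal_add (le_min (abs_nonneg _) hspos.le) (hf0 q)
        have htrunc : (volume Q) ^ β * ((volume Q)⁻¹ * ∫⁻ q in Q, ENNReal.ofReal (min |g q| s))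
            ≤ ENNReal.ofReal (l/2) := by
          refine le_trans (truncated_bound hn0 hβ0 hβ1.le hγ0 hγβ hapos.le hspos
            hQc hQsub hg hWk) (le_of_eq ?_)
          rw [hhalfeq]
        have hlt2 : ENNReal.ofReal (l/2)
            < (volume Q) ^ β * ((volume Q)⁻¹ * ∫⁻ q in Q, ENNReal.ofReal (f q)) := by
          by_contra hcon
          push_neg at hcon
          have hchain : ENNReal.ofReal l < ENNReal.ofReal (l/2) + ENNReal.ofReal (l/2) := by
            calc ENNReal.ofReal l
                < (volume Q) ^ β * ((volume Q)⁻¹ * ∫⁻ q in Q, ENNReal.ofReal |g q|) := hlt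
              _ ≤ (volume Q) ^ β * ((volume Q)⁻¹ *
                  ((∫⁻ q in Q, ENNReal.ofReal (min |g q| s)) + ∫⁻ q in Q, ENNReal.ofReal (f q))) := by
                  gcongr
              _ = (volume Q) ^ β * ((volume Q)⁻¹ * ∫⁻ q in Q, ENNReal.ofReal (min |g q| s))
                  + (volume Q) ^ β * ((volume Q)⁻¹ * ∫⁻ q in Q, ENNReal.ofReal (f q)) := by
                  ring
              _ ≤ ENNReal.ofReal (l/2) + ENNReal.ofReal (l/2) := add_le_add htrunc hcon
          rw [← ENNReal.ofReal_add (by positivity) (by positivity),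
            show l/2 + l/2 = l by ring] at hchain
          exact lt_irrefl _ hchain
        have hWne0 : (volume Q) ^ ((1:ℝ)-β) ≠ 0 := by
          simp only [ne_eq, ENNReal.rpow_eq_zero_iff, not_or, not_and]
          exact ⟨fun h => absurd h hV0, fun h => absurd h hVtop⟩
        have hrw : (volume Q) ^ β * ((volume Q)⁻¹ * ∫⁻ q in Q, ENNReal.ofReal (f q))
            = (∫⁻ q in Q, ENNReal.ofReal (f q)) / (volume Q) ^ (1-β) := by
          rw [← ENNReal.rpow_neg_one (volume Q), ← mul_assoc,
            ← ENNReal.rpow_add _ _ hV0 hVtop,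
            show β + (-1 : ℝ) = -(1-β) by ring, ENNReal.rpow_neg, div_eq_mul_inv, mul_comm]
        rw [hrw] at hlt2
        exact ⟨Q, hQc, hQsub, hpQ, ENNReal.mul_lt_of_lt_div hlt2⟩
      -- apply the covering bound
      have hvol : volume {p ∈ Q₀ | ENNReal.ofReal l < parMaximal n α Q₀ g p}
          ≤ ENNReal.ofReal (5 ^ n * 50) *
            ((∫⁻ q in Q₀, ENNReal.ofReal (f q)) / ENNReal.ofReal (l/2)) ^ ((1:ℝ)/(1-β)) :=
        le_trans (measure_mono hsubset)
          (vitali_bound hn0 hβ0 hβ1 Q₀ hQ₀top _ hfm.ennreal_ofReal (ENNReal.ofReal (l/2))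
            (ENNReal.ofReal_pos.mpr (by positivity)).ne' ENNReal.ofReal_ne_top)
      have htail : ∫⁻ q in Q₀, ENNReal.ofReal (f q)
          ≤ ENNReal.ofReal ((γ/(γ-1)) * a ^ γ * s ^ (1-γ)) :=
        tail_bound hγ hapos.le hspos hQ₀m hg hWk
      have hvol2 : volume {p ∈ Q₀ | ENNReal.ofReal l < parMaximal n α Q₀ g p}
          ≤ ENNReal.ofReal (5 ^ n * 50 *
            ((γ/(γ-1)) * a ^ γ * s ^ (1-γ) / (l/2)) ^ ((1:ℝ)/(1-β))) := by
        refine le_trans hvol ?_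
        calc ENNReal.ofReal (5 ^ n * 50) *
            ((∫⁻ q in Q₀, ENNReal.ofReal (f q)) / ENNReal.ofReal (l/2)) ^ ((1:ℝ)/(1-β))
            ≤ ENNReal.ofReal (5 ^ n * 50) *
              (ENNReal.ofReal ((γ/(γ-1)) * a ^ γ * s ^ (1-γ)) / ENNReal.ofReal (l/2))
                ^ ((1:ℝ)/(1-β)) := by
              exact mul_le_mul_right (ENNReal.rpow_le_rpow
                (ENNReal.div_le_div_right htail _) (by positivity)) _
          _ = ENNReal.ofReal (5 ^ n * 50 *
              ((γ/(γ-1)) * a ^ γ * s ^ (1-γ) / (l/2)) ^ ((1:ℝ)/(1-β))) := by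
              rw [← ENNReal.ofReal_div_of_pos (by positivity),
                ENNReal.ofReal_rpow_of_pos (by positivity),
                ← ENNReal.ofReal_mul (by positivity)]
      calc ENNReal.ofReal (l ^ (γ/(1-γ*β))) *
            volume {p ∈ Q₀ | ENNReal.ofReal l < parMaximal n α Q₀ g p}
          ≤ ENNReal.ofReal (l ^ (γ/(1-γ*β))) * ENNReal.ofReal (5 ^ n * 50 *
              ((γ/(γ-1)) * a ^ γ * s ^ (1-γ) / (l/2)) ^ ((1:ℝ)/(1-β))) :=
            mul_le_mul_right hvol2 _
        _ = ENNReal.ofReal (l ^ (γ/(1-γ*β)) * (5 ^ n * 50 *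
              ((γ/(γ-1)) * a ^ γ * s ^ (1-γ) / (l/2)) ^ ((1:ℝ)/(1-β)))) :=
            (ENNReal.ofReal_mul (by positivity)).symm
        _ = ENNReal.ofReal (K * a ^ (γ/(1-γ*β))) := by
            congr 1
            have hkr := key_real hγ hβ0 hβ1 hγβ hapos hl
            rw [hsdef, hK]
            linear_combination (5:ℝ) ^ n * 50 * hkr
    calc (⨆ (l:ℝ) (_ : 0 < l), ENNReal.ofReal (l ^ (γ/(1-γ*β))) *
          volume {p ∈ Q₀ | ENNReal.ofReal l < parMaximal n α Q₀ g p}) ^ (1/(γ/(1-γ*β)))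
        ≤ (ENNReal.ofReal (K * a ^ (γ/(1-γ*β)))) ^ (1/(γ/(1-γ*β))) := by
          refine ENNReal.rpow_le_rpow ?_ (by positivity)
          exact iSup_le fun l => iSup_le fun hl => hmain l hl
      _ = ENNReal.ofReal ((K * a ^ (γ/(1-γ*β))) ^ (1/(γ/(1-γ*β)))) :=
          ENNReal.ofReal_rpow_of_pos (by positivity)
      _ = ENNReal.ofReal (K ^ ((1:ℝ)/(γ/(1-γ*β))) * a) := by
          congr 1
          rw [Real.mul_rpow hKpos.le (by positivity), ← Real.rpow_mul hapos.le,
            mul_one_div, div_self hqpos.ne', Real.rpow_one]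
      _ = ENNReal.ofReal (K ^ ((1:ℝ)/(γ/(1-γ*β)))) * A := by
          rw [ENNReal.ofReal_mul (Real.rpow_pos_of_pos hKpos _).le, hAeq]
end

section
/- (Level-set iteration lemma.) Let V > 0, m > 0, B > 1, λ₁ > 0, ε > 0 and c ≥ 0, and let μ₁ : (0,∞) → [0,V] and μ₂ : (0,∞) → [0,∞] be nonincreasing functions. Assume that for every integer k ≥ 0, B^{m(k+1)} λ₁^m μ₁(B^{k+1} λ₁) ≤ (1/4) B^{mk} λ₁^m μ₁(B^{k} λ₁) + c B^{mk} (ε λ₁)^m μ₂(B^{k} ε λ₁). Then for every β ∈ (0,∞) there exists a constant C, depending only on β, m, B and c, such that ∫₀^∞ ( λ^m μ₁(λ) )^{β/m} dλ/λ ≤ C ( λ₁^β V^{β/m} + ∫₀^∞ ( λ^m μ₂(λ) )^{β/m} dλ/λ ). -/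
open MeasureTheory Set ENNReal

lemma aux_rpow_add_le (x y : ℝ≥0∞) {γ : ℝ} (hγ : 0 ≤ γ) :
    (x + y) ^ γ ≤ 2 ^ γ * (x ^ γ + y ^ γ) := by
  calc (x + y) ^ γ ≤ (2 * (x ⊔ y)) ^ γ := by
        apply ENNReal.rpow_le_rpow _ hγ
        rw [two_mul]
        exact add_le_add le_sup_left le_sup_right
    _ = 2 ^ γ * (x ⊔ y) ^ γ := ENNReal.mul_rpow_of_nonneg _ _ hγ
    _ ≤ 2 ^ γ * (x ^ γ + y ^ γ) := by
        apply mul_le_mul_right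
        rcases le_total x y with h | h
        · rw [sup_eq_right.2 h]; exact le_add_self
        · rw [sup_eq_left.2 h]; exact le_self_add

lemma aux_absorb {x a θ : ℝ≥0∞} (hθ : θ < 1) (hx : x ≠ ⊤) (h : x ≤ a + θ * x) :
    x ≤ (1 - θ)⁻¹ * a := by
  have hθx : θ * x ≠ ⊤ := ENNReal.mul_ne_top (hθ.trans_le le_top).ne hx
  have h1 : (1 - θ) * x + θ * x = x := by
    rw [← add_mul, tsub_add_cancel_of_le hθ.le, one_mul]
  have h2 : (1 - θ) * x + θ * x ≤ a + θ * x := by rw [h1]; exact h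
  have h3 : (1 - θ) * x ≤ a := (ENNReal.add_le_add_iff_right hθx).1 h2
  have h4 : (1 - θ) ≠ 0 := by
    simpa [pos_iff_ne_zero] using (tsub_pos_of_lt hθ).ne'
  have h5 : (1 - θ) ≠ ⊤ := (tsub_le_self.trans_lt (by exact one_lt_top)).ne
  calc x = (1 - θ)⁻¹ * ((1 - θ) * x) := by
        rw [← mul_assoc, ENNReal.inv_mul_cancel h4 h5, one_mul]
    _ ≤ (1 - θ)⁻¹ * a := mul_le_mul_right h3 _

lemma aux_int_upper {lo up : ℝ} (h0 : 0 < lo) (f : ℝ → ℝ≥0∞) (c₀ : ℝ≥0∞)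
    (hf : ∀ l ∈ Ioc lo up, f l ≤ c₀ * ENNReal.ofReal lo⁻¹) :
    ∫⁻ l in Ioc lo up, f l ≤ c₀ * ENNReal.ofReal (lo⁻¹ * (up - lo)) := by
  calc ∫⁻ l in Ioc lo up, f l ≤ ∫⁻ _ in Ioc lo up, c₀ * ENNReal.ofReal lo⁻¹ :=
        setLIntegral_mono' measurableSet_Ioc hf
    _ = c₀ * ENNReal.ofReal lo⁻¹ * ENNReal.ofReal (up - lo) := by
        rw [setLIntegral_const, Real.volume_Ioc]
    _ = c₀ * ENNReal.ofReal (lo⁻¹ * (up - lo)) := by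
        rw [mul_assoc, ← ENNReal.ofReal_mul (by positivity)]

lemma aux_int_lower {lo up : ℝ} (h0 : 0 < lo) (hle : lo ≤ up) (f : ℝ → ℝ≥0∞) (c₀ : ℝ≥0∞)
    (hf : ∀ l ∈ Ioc lo up, c₀ * ENNReal.ofReal up⁻¹ ≤ f l) :
    c₀ * ENNReal.ofReal (up⁻¹ * (up - lo)) ≤ ∫⁻ l in Ioc lo up, f l := by
  have : c₀ * ENNReal.ofReal (up⁻¹ * (up - lo))
      = c₀ * ENNReal.ofReal up⁻¹ * ENNReal.ofReal (up - lo) := by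
    rw [mul_assoc, ← ENNReal.ofReal_mul (inv_nonneg.2 (h0.trans_le hle).le)]
  rw [this, ← Real.volume_Ioc (a := lo) (b := up), ← setLIntegral_const]
  exact setLIntegral_mono' measurableSet_Ioc hf

/-- **level-set iteration lemma.** Let `V > 0`, `m > 0`, `B > 1`, `λ₁ > 0`,
`ε > 0`, `c ≥ 0`, and let `μ₁ : (0,∞) → [0,V]`, `μ₂ : (0,∞) → [0,∞]` be nonincreasing.
If for all integers `k ≥ 0`
`B^{m(k+1)} λ₁^m μ₁(B^{k+1}λ₁) ≤ (1/4) B^{mk} λ₁^m μ₁(B^k λ₁) + c B^{mk} (ελ₁)^m μ₂(B^k ελ₁)`,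
then for every `β ∈ (0,∞)` there is `C = C(β,m,B,c)` with
`∫₀^∞ (λ^m μ₁(λ))^{β/m} dλ/λ ≤ C ( λ₁^β V^{β/m} + ∫₀^∞ (λ^m μ₂(λ))^{β/m} dλ/λ )`. -/
theorem levelset_iteration (m B c β : ℝ) (hm : 0 < m) (hB : 1 < B) (hc : 0 ≤ c)
    (hβ : 0 < β) :
    ∃ C : ℝ, 0 < C ∧
      ∀ (V lam₁ ε : ℝ), 0 < V → 0 < lam₁ → 0 < ε →
      ∀ (μ₁ : ℝ → ℝ) (μ₂ : ℝ → ℝ≥0∞),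
        (∀ l : ℝ, 0 < l → 0 ≤ μ₁ l ∧ μ₁ l ≤ V) →
        (∀ a b : ℝ, 0 < a → a ≤ b → μ₁ b ≤ μ₁ a) →
        (∀ a b : ℝ, 0 < a → a ≤ b → μ₂ b ≤ μ₂ a) →
        (∀ k : ℕ,
          ENNReal.ofReal (B ^ (m * ((k : ℝ) + 1)) * lam₁ ^ m * μ₁ (B ^ ((k : ℝ) + 1) * lam₁)) ≤
            ENNReal.ofReal
                ((1 / 4) * B ^ (m * (k : ℝ)) * lam₁ ^ m * μ₁ (B ^ (k : ℝ) * lam₁)) +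
              ENNReal.ofReal (c * B ^ (m * (k : ℝ)) * (ε * lam₁) ^ m) *
                μ₂ (B ^ (k : ℝ) * ε * lam₁)) →
        (∫⁻ l in Set.Ioi (0 : ℝ),
            ENNReal.ofReal (l ^ m * μ₁ l) ^ (β / m) * ENNReal.ofReal l⁻¹) ≤
          ENNReal.ofReal C *
            (ENNReal.ofReal (lam₁ ^ β * V ^ (β / m)) +
              ∫⁻ l in Set.Ioi (0 : ℝ),
                (ENNReal.ofReal (l ^ m) * μ₂ l) ^ (β / m) * ENNReal.ofReal l⁻¹) := by
  classical
  have hB0 : (0:ℝ) < B := lt_trans one_pos hB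
  set γ := β / m with hγdef
  have hγ : 0 < γ := div_pos hβ hm
  have hmγ : m * γ = β := by rw [hγdef]; field_simp
  -- constants
  set θ : ℝ≥0∞ := ENNReal.ofReal (1/2) ^ γ with hθdef
  have hθ1 : θ < 1 := ENNReal.rpow_lt_one (by rw [← ENNReal.ofReal_one]; exact ENNReal.ofReal_lt_ofReal_iff_of_nonneg (by norm_num) |>.2 (by norm_num)) hγ
  set t : ℝ≥0∞ := (1 - θ)⁻¹ with htdef
  set r : ℝ≥0∞ := ENNReal.ofReal (B ^ (-β)) with hrdef
  have hr1 : r < 1 := by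
    rw [hrdef, ← ENNReal.ofReal_one]
    exact ENNReal.ofReal_lt_ofReal_iff_of_nonneg (Real.rpow_nonneg hB0.le _) |>.2
      (Real.rpow_lt_one_of_one_lt_of_neg hB (neg_lt_zero.2 hβ))
  set g : ℝ≥0∞ := (1 - r)⁻¹ with hgdef
  set w : ℝ≥0∞ := ENNReal.ofReal (1 - B⁻¹) with hwdef
  have hw0 : w ≠ 0 := by
    rw [hwdef]
    simp only [ne_eq, ENNReal.ofReal_eq_zero, not_le]
    have : B⁻¹ < 1 := inv_lt_one_of_one_lt₀ hB
    linarith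
  have hwtop : w ≠ ⊤ := ENNReal.ofReal_ne_top
  set K' : ℝ≥0∞ := ENNReal.ofReal ((c * B ^ m) ^ γ) * w⁻¹ with hK'def
  set K₁ : ℝ≥0∞ := ENNReal.ofReal (B - 1) * g + ENNReal.ofReal ((B ^ m) ^ γ * (B - 1)) * t with hK₁def
  set K₂ : ℝ≥0∞ := ENNReal.ofReal ((B ^ m) ^ γ * (B - 1)) * t * (2 ^ γ * K') with hK₂def
  have htne : t ≠ ⊤ := by
    rw [htdef]
    simp only [ne_eq, ENNReal.inv_eq_top]
    exact fun h => by simpa [pos_iff_ne_zero] using (tsub_pos_of_lt hθ1).ne' h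
  have hgne : g ≠ ⊤ := by
    rw [hgdef]
    simp only [ne_eq, ENNReal.inv_eq_top]
    exact fun h => by simpa [pos_iff_ne_zero] using (tsub_pos_of_lt hr1).ne' h
  have hK'ne : K' ≠ ⊤ := ENNReal.mul_ne_top ENNReal.ofReal_ne_top (by simp [ENNReal.inv_eq_top, hw0])
  have hK₁ne : K₁ ≠ ⊤ := by
    rw [hK₁def]
    exact ENNReal.add_ne_top.2 ⟨ENNReal.mul_ne_top ENNReal.ofReal_ne_top hgne,
      ENNReal.mul_ne_top ENNReal.ofReal_ne_top htne⟩
  have hK₂ne : K₂ ≠ ⊤ := by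
    rw [hK₂def]
    exact ENNReal.mul_ne_top (ENNReal.mul_ne_top ENNReal.ofReal_ne_top htne)
      (ENNReal.mul_ne_top (ENNReal.rpow_ne_top_of_nonneg hγ.le (by norm_num)) hK'ne)
  refine ⟨max 1 (K₁.toReal + K₂.toReal), lt_of_lt_of_le one_pos (le_max_left _ _), ?_⟩
  intro V lam₁ ε hV hlam hε μ₁ μ₂ hμ₁b hμ₁m hμ₂m hiter
  have hpow_pos : ∀ x : ℝ, 0 < B ^ x := fun x => Real.rpow_pos_of_pos hB0 x
  set A : ℕ → ℝ≥0∞ :=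
    fun k => ENNReal.ofReal (B ^ (m * (k:ℝ)) * lam₁ ^ m * μ₁ (B ^ (k:ℝ) * lam₁)) with hAdef
  set D : ℕ → ℝ≥0∞ :=
    fun k => ENNReal.ofReal (c * B ^ (m * (k:ℝ)) * (ε * lam₁) ^ m) *
      μ₂ (B ^ (k:ℝ) * ε * lam₁) with hDdef
  set T : ℝ≥0∞ := ∑' j, D j ^ γ with hTdef
  set I₂ : ℝ≥0∞ := ∫⁻ l in Set.Ioi (0 : ℝ),
      (ENNReal.ofReal (l ^ m) * μ₂ l) ^ γ * ENNReal.ofReal l⁻¹ with hI₂def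
  -- Step inequality
  have hstep : ∀ k, A (k+1) ^ γ ≤ θ * A k ^ γ + 2 ^ γ * D k ^ γ := by
    intro k
    have h := hiter k
    have h1 : A (k+1) ≤ ENNReal.ofReal (1/4) * A k + D k := by
      have e : ((1:ℝ)/4) * B ^ (m * (k:ℝ)) * lam₁ ^ m * μ₁ (B ^ (k:ℝ) * lam₁)
          = (1/4) * (B ^ (m * (k:ℝ)) * lam₁ ^ m * μ₁ (B ^ (k:ℝ) * lam₁)) := by ring
      rw [e, ENNReal.ofReal_mul (p := 1/4) (by norm_num)] at h
      simp only [hAdef, hDdef, Nat.cast_add, Nat.cast_one]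
      exact h
    calc A (k+1) ^ γ ≤ (ENNReal.ofReal (1/4) * A k + D k) ^ γ :=
          ENNReal.rpow_le_rpow h1 hγ.le
      _ ≤ 2 ^ γ * ((ENNReal.ofReal (1/4) * A k) ^ γ + D k ^ γ) := aux_rpow_add_le _ _ hγ.le
      _ = θ * A k ^ γ + 2 ^ γ * D k ^ γ := by
          rw [ENNReal.mul_rpow_of_nonneg _ _ hγ.le, mul_add, ← mul_assoc]
          congr 1
          rw [hθdef, ← ENNReal.mul_rpow_of_nonneg _ _ hγ.le]
          congr 1
          rw [show (2:ℝ≥0∞) = ENNReal.ofReal 2 from (ENNReal.ofReal_ofNat 2).symm,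
            ← ENNReal.ofReal_mul (by norm_num)]
          norm_num
  have hA0 : A 0 ^ γ ≤ ENNReal.ofReal (lam₁ ^ β * V ^ γ) := by
    have e : A 0 = ENNReal.ofReal (lam₁ ^ m * μ₁ lam₁) := by
      simp [hAdef, Real.rpow_zero]
    have e2 : A 0 ≤ ENNReal.ofReal (lam₁ ^ m * V) := by
      rw [e]
      exact ENNReal.ofReal_le_ofReal
        (mul_le_mul_of_nonneg_left (hμ₁b lam₁ hlam).2 (Real.rpow_nonneg hlam.le m))
    calc A 0 ^ γ ≤ ENNReal.ofReal (lam₁ ^ m * V) ^ γ := ENNReal.rpow_le_rpow e2 hγ.le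
      _ = ENNReal.ofReal ((lam₁ ^ m * V) ^ γ) :=
          ENNReal.ofReal_rpow_of_nonneg (by positivity) hγ.le
      _ = ENNReal.ofReal (lam₁ ^ β * V ^ γ) := by
          rw [Real.mul_rpow (Real.rpow_nonneg hlam.le m) hV.le,
            ← Real.rpow_mul hlam.le, hmγ]
  have hAfin : ∀ k, A k ^ γ ≠ ⊤ := fun k =>
    ENNReal.rpow_ne_top_of_nonneg hγ.le (by simp [hAdef])
  -- Summation / absorption
  have hS : ∑' k, A k ^ γ ≤ t * (ENNReal.ofReal (lam₁ ^ β * V ^ γ) + 2 ^ γ * T) := by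
    have hSN : ∀ N, ∑ k ∈ Finset.range N, A k ^ γ ≤
        (ENNReal.ofReal (lam₁ ^ β * V ^ γ) + 2 ^ γ * T) + θ * ∑ k ∈ Finset.range N, A k ^ γ := by
      intro N
      match N with
      | 0 => simp
      | (N+1) =>
        calc ∑ k ∈ Finset.range (N+1), A k ^ γ
            = (∑ i ∈ Finset.range N, A (i+1) ^ γ) + A 0 ^ γ := Finset.sum_range_succ' _ _
          _ ≤ (∑ i ∈ Finset.range N, (θ * A i ^ γ + 2 ^ γ * D i ^ γ))
                + ENNReal.ofReal (lam₁ ^ β * V ^ γ) :=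
              add_le_add (Finset.sum_le_sum fun i _ => hstep i) hA0
          _ = θ * (∑ i ∈ Finset.range N, A i ^ γ) + 2 ^ γ * (∑ i ∈ Finset.range N, D i ^ γ)
                + ENNReal.ofReal (lam₁ ^ β * V ^ γ) := by
              rw [Finset.sum_add_distrib, ← Finset.mul_sum, ← Finset.mul_sum]
          _ ≤ θ * (∑ k ∈ Finset.range (N+1), A k ^ γ) + 2 ^ γ * T
                + ENNReal.ofReal (lam₁ ^ β * V ^ γ) := by
              refine add_le_add (add_le_add (mul_le_mul_right ?_ θ)
                (mul_le_mul_right ?_ _)) le_rfl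
              · exact Finset.sum_le_sum_of_subset (Finset.range_subset_range.2 (Nat.le_succ N))
              · rw [hTdef]; exact ENNReal.sum_le_tsum _
          _ = (ENNReal.ofReal (lam₁ ^ β * V ^ γ) + 2 ^ γ * T)
                + θ * ∑ k ∈ Finset.range (N+1), A k ^ γ := by ring
    have habs : ∀ N, ∑ k ∈ Finset.range N, A k ^ γ ≤
        t * (ENNReal.ofReal (lam₁ ^ β * V ^ γ) + 2 ^ γ * T) := fun N =>
      aux_absorb hθ1 (ENNReal.sum_lt_top.2 fun k _ => (hAfin k).lt_top).ne (hSN N)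
    rw [ENNReal.tsum_eq_iSup_sum]
    refine iSup_le fun s => ?_
    obtain ⟨n, hn⟩ := s.exists_nat_subset_range
    exact (Finset.sum_le_sum_of_subset hn).trans (habs n)
  -- μ₂ part
  have hT : T ≤ K' * I₂ := by
    set lo : ℕ → ℝ := fun j => B ^ ((j:ℝ) - 1) * ε * lam₁ with hlodef
    set up : ℕ → ℝ := fun j => B ^ (j:ℝ) * ε * lam₁ with hupdef
    have hlop : ∀ j, 0 < lo j := fun j => by
      simp only [hlodef]; positivity
    have hlu : ∀ j, lo j < up j := by
      intro j
      simp only [hlodef, hupdef]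
      have h1 : B ^ ((j:ℝ) - 1) < B ^ (j:ℝ) :=
        Real.rpow_lt_rpow_left_iff hB |>.2 (by linarith)
      exact mul_lt_mul_of_pos_right (mul_lt_mul_of_pos_right h1 hε) hlam
    have key : ∀ j : ℕ, D j ^ γ ≤ K' * ∫⁻ l in Ioc (lo j) (up j),
        (ENNReal.ofReal (l ^ m) * μ₂ l) ^ γ * ENNReal.ofReal l⁻¹ := by
      intro j
      set X : ℝ≥0∞ := (ENNReal.ofReal ((lo j) ^ m) * μ₂ (up j)) ^ γ with hXdef
      have hlow : X * ENNReal.ofReal ((up j)⁻¹ * (up j - lo j)) ≤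
          ∫⁻ l in Ioc (lo j) (up j),
            (ENNReal.ofReal (l ^ m) * μ₂ l) ^ γ * ENNReal.ofReal l⁻¹ := by
        apply aux_int_lower (hlop j) (hlu j).le
        intro l hl
        have hl0 : 0 < l := (hlop j).trans hl.1
        refine mul_le_mul' (ENNReal.rpow_le_rpow (mul_le_mul' ?_ ?_) hγ.le) ?_
        · exact ENNReal.ofReal_le_ofReal (Real.rpow_le_rpow (hlop j).le hl.1.le hm.le)
        · exact hμ₂m l (up j) hl0 hl.2
        · exact ENNReal.ofReal_le_ofReal (inv_anti₀ hl0 hl.2)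
      have hwj : (up j)⁻¹ * (up j - lo j) = 1 - B⁻¹ := by
        simp only [hlodef, hupdef]
        have e1 : B ^ ((j:ℝ) - 1) = B ^ (j:ℝ) * B⁻¹ := by
          rw [← Real.rpow_neg_one B, ← Real.rpow_add hB0]; ring_nf
        rw [e1]
        have h2 : B ^ (j:ℝ) * ε * lam₁ ≠ 0 := by positivity
        field_simp
      have hD : D j ^ γ = ENNReal.ofReal ((c * B ^ m) ^ γ) * X := by
        have e2 : c * B ^ (m * (j:ℝ)) * (ε * lam₁) ^ m = (c * B ^ m) * (lo j) ^ m := by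
          simp only [hlodef]
          rw [mul_assoc (B ^ ((j:ℝ)-1)) ε lam₁,
            Real.mul_rpow (hpow_pos _).le (by positivity),
            ← Real.rpow_mul hB0.le,
            show ((j:ℝ)-1)*m = m*(j:ℝ) - m by ring, Real.rpow_sub hB0]
          field_simp
        have e3 : D j = ENNReal.ofReal (c * B ^ m) * (ENNReal.ofReal ((lo j) ^ m) * μ₂ (up j)) := by
          rw [hDdef]
          simp only
          rw [e2, ENNReal.ofReal_mul (by positivity), mul_assoc]
        rw [e3, ENNReal.mul_rpow_of_nonneg _ _ hγ.le,
          ENNReal.ofReal_rpow_of_nonneg (by positivity) hγ.le, hXdef]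
      rw [hD]
      have hXw : X * w ≤ ∫⁻ l in Ioc (lo j) (up j),
          (ENNReal.ofReal (l ^ m) * μ₂ l) ^ γ * ENNReal.ofReal l⁻¹ := by
        rw [hwdef, ← hwj]; exact hlow
      have hX2 : X ≤ w⁻¹ * ∫⁻ l in Ioc (lo j) (up j),
          (ENNReal.ofReal (l ^ m) * μ₂ l) ^ γ * ENNReal.ofReal l⁻¹ := by
        calc X = w⁻¹ * (X * w) := by
              rw [mul_comm X w, ← mul_assoc, ENNReal.inv_mul_cancel hw0 hwtop, one_mul]
          _ ≤ _ := mul_le_mul_right hXw _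
      calc ENNReal.ofReal ((c * B ^ m) ^ γ) * X
          ≤ ENNReal.ofReal ((c * B ^ m) ^ γ) * (w⁻¹ * ∫⁻ l in Ioc (lo j) (up j),
              (ENNReal.ofReal (l ^ m) * μ₂ l) ^ γ * ENNReal.ofReal l⁻¹) :=
            mul_le_mul_right hX2 _
        _ = K' * _ := by rw [hK'def, mul_assoc]
    have hdisj : Pairwise (Function.onFun Disjoint fun j : ℕ => Ioc (lo j) (up j)) := by
      have mono : ∀ i j : ℕ, i < j → up i ≤ lo j := by
        intro i j hij
        simp only [hupdef, hlodef]
        have h1 : (i:ℝ) ≤ (j:ℝ) - 1 := by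
          have : (i:ℝ) + 1 ≤ (j:ℝ) := by exact_mod_cast hij
          linarith
        exact mul_le_mul_of_nonneg_right (mul_le_mul_of_nonneg_right
          (Real.rpow_le_rpow_of_exponent_le hB.le h1) hε.le) hlam.le
      intro i j hij
      rcases hij.lt_or_gt with h | h
      · refine Set.Ioc_disjoint_Ioc.2 ?_
        exact le_trans (min_le_left _ _) (le_trans (mono i j h) (le_max_right _ _))
      · refine Set.Ioc_disjoint_Ioc.2 ?_
        exact le_trans (min_le_right _ _) (le_trans (mono j i h) (le_max_left _ _))
    calc T ≤ ∑' j, K' * ∫⁻ l in Ioc (lo j) (up j),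
          (ENNReal.ofReal (l ^ m) * μ₂ l) ^ γ * ENNReal.ofReal l⁻¹ := by
          rw [hTdef]; exact ENNReal.tsum_le_tsum key
      _ = K' * ∑' j, ∫⁻ l in Ioc (lo j) (up j),
          (ENNReal.ofReal (l ^ m) * μ₂ l) ^ γ * ENNReal.ofReal l⁻¹ := ENNReal.tsum_mul_left
      _ = K' * ∫⁻ l in ⋃ j, Ioc (lo j) (up j),
          (ENNReal.ofReal (l ^ m) * μ₂ l) ^ γ * ENNReal.ofReal l⁻¹ := by
          rw [lintegral_iUnion (fun j => measurableSet_Ioc) hdisj]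
      _ ≤ K' * I₂ := by
          rw [hI₂def]
          refine mul_le_mul_right (lintegral_mono_set ?_) _
          exact iUnion_subset fun j x hx => (hlop j).trans hx.1
  -- big-lambda intervals
  have hBg : ∀ k : ℕ, (∫⁻ l in Ioc (B ^ (k:ℝ) * lam₁) (B ^ ((k:ℝ)+1) * lam₁),
      ENNReal.ofReal (l ^ m * μ₁ l) ^ γ * ENNReal.ofReal l⁻¹) ≤
      ENNReal.ofReal ((B ^ m) ^ γ * (B - 1)) * A k ^ γ := by
    intro k
    set lo := B ^ (k:ℝ) * lam₁ with hlo
    set up := B ^ ((k:ℝ)+1) * lam₁ with hup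
    have hlop : 0 < lo := by rw [hlo]; positivity
    have hupm : up ^ m * μ₁ lo = B ^ m * (B ^ (m*(k:ℝ)) * lam₁ ^ m * μ₁ lo) := by
      rw [hup, Real.mul_rpow (hpow_pos _).le hlam.le, ← Real.rpow_mul hB0.le,
        show ((k:ℝ)+1)*m = m + m*(k:ℝ) by ring, Real.rpow_add hB0]
      ring
    have hAk : ENNReal.ofReal (up ^ m * μ₁ lo) = ENNReal.ofReal (B ^ m) * A k := by
      rw [hupm, ENNReal.ofReal_mul (hpow_pos m).le, hAdef]
    have step : (∫⁻ l in Ioc lo up, ENNReal.ofReal (l ^ m * μ₁ l) ^ γ * ENNReal.ofReal l⁻¹)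
        ≤ (ENNReal.ofReal (B ^ m) * A k) ^ γ * ENNReal.ofReal (lo⁻¹ * (up - lo)) := by
      apply aux_int_upper hlop
      intro l hl
      have hl0 : 0 < l := hlop.trans hl.1
      refine mul_le_mul' ?_ (ENNReal.ofReal_le_ofReal (inv_anti₀ hlop hl.1.le))
      rw [← hAk]
      refine ENNReal.rpow_le_rpow (ENNReal.ofReal_le_ofReal ?_) hγ.le
      exact mul_le_mul (Real.rpow_le_rpow hl0.le hl.2 hm.le) (hμ₁m lo l hlop hl.1.le)
        (hμ₁b l hl0).1 (Real.rpow_nonneg (by positivity) m)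
    have hba : lo⁻¹ * (up - lo) = B - 1 := by
      rw [hlo, hup, show B ^ ((k:ℝ)+1) = B ^ (k:ℝ) * B from by
        rw [Real.rpow_add hB0, Real.rpow_one]]
      have h2 : B ^ (k:ℝ) * lam₁ ≠ 0 := by positivity
      field_simp
    calc (∫⁻ l in Ioc lo up, ENNReal.ofReal (l ^ m * μ₁ l) ^ γ * ENNReal.ofReal l⁻¹)
        ≤ (ENNReal.ofReal (B ^ m) * A k) ^ γ * ENNReal.ofReal (lo⁻¹ * (up - lo)) := step
      _ = ENNReal.ofReal ((B ^ m) ^ γ * (B - 1)) * A k ^ γ := by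
          rw [hba, ENNReal.mul_rpow_of_nonneg _ _ hγ.le,
            ENNReal.ofReal_rpow_of_nonneg (hpow_pos m).le hγ.le,
            ENNReal.ofReal_mul (by positivity)]
          ring
  -- small-lambda intervals
  have hSm : ∀ k : ℕ, (∫⁻ l in Ioc (B ^ (-((k:ℝ)+1)) * lam₁) (B ^ (-(k:ℝ)) * lam₁),
      ENNReal.ofReal (l ^ m * μ₁ l) ^ γ * ENNReal.ofReal l⁻¹) ≤
      ENNReal.ofReal (lam₁ ^ β * V ^ γ) * ENNReal.ofReal (B - 1) * r ^ k := by
    intro k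
    set lo := B ^ (-((k:ℝ)+1)) * lam₁ with hlo
    set up := B ^ (-(k:ℝ)) * lam₁ with hup
    have hlop : 0 < lo := by rw [hlo]; positivity
    have hupp : 0 < up := by rw [hup]; positivity
    have step : (∫⁻ l in Ioc lo up, ENNReal.ofReal (l ^ m * μ₁ l) ^ γ * ENNReal.ofReal l⁻¹)
        ≤ ENNReal.ofReal ((up ^ m * V) ^ γ) * ENNReal.ofReal (lo⁻¹ * (up - lo)) := by
      apply aux_int_upper hlop
      intro l hl
      have hl0 : 0 < l := hlop.trans hl.1
      refine mul_le_mul' ?_ (ENNReal.ofReal_le_ofReal (inv_anti₀ hlop hl.1.le))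
      rw [← ENNReal.ofReal_rpow_of_nonneg (by positivity) hγ.le]
      refine ENNReal.rpow_le_rpow (ENNReal.ofReal_le_ofReal ?_) hγ.le
      exact mul_le_mul (Real.rpow_le_rpow hl0.le hl.2 hm.le) (hμ₁b l hl0).2
        (hμ₁b l hl0).1 (Real.rpow_nonneg (by positivity) m)
    have e1 : lo = up * B⁻¹ := by
      rw [hlo, hup, show -((k:ℝ)+1) = -(k:ℝ) + (-1) by ring, Real.rpow_add hB0,
        Real.rpow_neg_one]
      ring
    have e2 : (up ^ m) ^ γ = lam₁ ^ β * (B ^ (-β)) ^ k := by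
      rw [hup, Real.mul_rpow (hpow_pos _).le hlam.le, ← Real.rpow_mul hB0.le,
        Real.mul_rpow (hpow_pos _).le (Real.rpow_nonneg hlam.le m),
        ← Real.rpow_mul hB0.le, ← Real.rpow_mul hlam.le, hmγ,
        show -(k:ℝ) * m * γ = -β * (k:ℝ) from by rw [← hmγ]; ring,
        ← Real.rpow_natCast (B ^ (-β)) k, ← Real.rpow_mul hB0.le]
      ring
    have e3 : lo⁻¹ * (up - lo) = B - 1 := by
      rw [e1]
      have h2 : up ≠ 0 := hupp.ne'
      have h3 : B ≠ 0 := hB0.ne'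
      field_simp
    have hreal : (up ^ m * V) ^ γ * (lo⁻¹ * (up - lo))
        = (lam₁ ^ β * V ^ γ * (B - 1)) * (B ^ (-β)) ^ k := by
      rw [Real.mul_rpow (Real.rpow_nonneg hupp.le m) hV.le, e2, e3]
      ring
    calc (∫⁻ l in Ioc lo up, ENNReal.ofReal (l ^ m * μ₁ l) ^ γ * ENNReal.ofReal l⁻¹)
        ≤ ENNReal.ofReal ((up ^ m * V) ^ γ) * ENNReal.ofReal (lo⁻¹ * (up - lo)) := step
      _ = ENNReal.ofReal (lam₁ ^ β * V ^ γ) * ENNReal.ofReal (B - 1) * r ^ k := by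
          rw [← ENNReal.ofReal_mul (by positivity), hreal,
            ENNReal.ofReal_mul (mul_nonneg (by positivity) (by linarith)),
            ENNReal.ofReal_mul (by positivity),
            ENNReal.ofReal_pow (Real.rpow_nonneg hB0.le _), hrdef]
  -- covering of (0,∞)
  have cover : Ioi (0:ℝ) ⊆ (⋃ k:ℕ, Ioc (B ^ (-((k:ℝ)+1)) * lam₁) (B ^ (-(k:ℝ)) * lam₁)) ∪
      ⋃ k:ℕ, Ioc (B ^ (k:ℝ) * lam₁) (B ^ ((k:ℝ)+1) * lam₁) := by
    intro l hl
    have hl0 : 0 < l := hl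
    rcases le_or_gt l lam₁ with hle | hgt
    · left
      have hex : ∃ k:ℕ, B ^ (-((k:ℝ)+1)) * lam₁ < l := by
        obtain ⟨n, hn⟩ := pow_unbounded_of_one_lt (lam₁ / l) hB
        refine ⟨n, ?_⟩
        have h1 : lam₁ / l < B ^ ((n:ℝ)+1) := by
          calc lam₁ / l < B ^ n := hn
            _ ≤ B ^ (n+1) := pow_le_pow_right₀ hB.le (Nat.le_succ n)
            _ = B ^ ((n:ℝ)+1) := by
                rw [← Real.rpow_natCast B (n+1), Nat.cast_add, Nat.cast_one]
        rw [Real.rpow_neg hB0.le, inv_mul_lt_iff₀ (hpow_pos _)]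
        exact (div_lt_iff₀ hl0).1 h1
      have hspec := Nat.find_spec hex
      refine mem_iUnion.2 ⟨Nat.find hex, hspec, ?_⟩
      rcases Nat.eq_zero_or_pos (Nat.find hex) with h0 | hpos
      · rw [h0]
        simpa using hle
      · obtain ⟨j, hj⟩ := Nat.exists_eq_succ_of_ne_zero hpos.ne'
        have hmin := Nat.find_min hex (by rw [hj]; exact Nat.lt_succ_self j)
        push_neg at hmin
        rw [hj]
        push_cast
        push_cast at hmin
        linarith
    · right
      have hex : ∃ k:ℕ, l ≤ B ^ ((k:ℝ)+1) * lam₁ := by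
        obtain ⟨n, hn⟩ := pow_unbounded_of_one_lt (l / lam₁) hB
        refine ⟨n, le_of_lt ?_⟩
        have h1 : l / lam₁ < B ^ ((n:ℝ)+1) := by
          calc l / lam₁ < B ^ n := hn
            _ ≤ B ^ (n+1) := pow_le_pow_right₀ hB.le (Nat.le_succ n)
            _ = B ^ ((n:ℝ)+1) := by
                rw [← Real.rpow_natCast B (n+1), Nat.cast_add, Nat.cast_one]
        calc l = l / lam₁ * lam₁ := by field_simp
          _ < B ^ ((n:ℝ)+1) * lam₁ := mul_lt_mul_of_pos_right h1 hlam
      have hspec := Nat.find_spec hex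
      refine mem_iUnion.2 ⟨Nat.find hex, ?_, hspec⟩
      rcases Nat.eq_zero_or_pos (Nat.find hex) with h0 | hpos
      · rw [h0]
        simpa using hgt
      · obtain ⟨j, hj⟩ := Nat.exists_eq_succ_of_ne_zero hpos.ne'
        have hmin := Nat.find_min hex (by rw [hj]; exact Nat.lt_succ_self j)
        push_neg at hmin
        rw [hj]
        push_cast
        push_cast at hmin
        linarith
  -- assembly
  set u : ℝ≥0∞ := ENNReal.ofReal (lam₁ ^ β * V ^ γ) with hudef
  have hsum1 : (∑' k:ℕ, ∫⁻ l in Ioc (B ^ (-((k:ℝ)+1)) * lam₁) (B ^ (-(k:ℝ)) * lam₁),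
      ENNReal.ofReal (l ^ m * μ₁ l) ^ γ * ENNReal.ofReal l⁻¹)
      ≤ u * ENNReal.ofReal (B - 1) * g := by
    calc (∑' k:ℕ, ∫⁻ l in Ioc (B ^ (-((k:ℝ)+1)) * lam₁) (B ^ (-(k:ℝ)) * lam₁),
        ENNReal.ofReal (l ^ m * μ₁ l) ^ γ * ENNReal.ofReal l⁻¹)
        ≤ ∑' k:ℕ, u * ENNReal.ofReal (B - 1) * r ^ k := ENNReal.tsum_le_tsum hSm
      _ = u * ENNReal.ofReal (B - 1) * ∑' k:ℕ, r ^ k := by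
          simp only [mul_assoc]
          rw [ENNReal.tsum_mul_left, ENNReal.tsum_mul_left]
      _ = u * ENNReal.ofReal (B - 1) * g := by rw [ENNReal.tsum_geometric, hgdef]
  have hsum2 : (∑' k:ℕ, ∫⁻ l in Ioc (B ^ (k:ℝ) * lam₁) (B ^ ((k:ℝ)+1) * lam₁),
      ENNReal.ofReal (l ^ m * μ₁ l) ^ γ * ENNReal.ofReal l⁻¹)
      ≤ ENNReal.ofReal ((B ^ m) ^ γ * (B - 1)) * (t * (u + 2 ^ γ * (K' * I₂))) := by
    calc (∑' k:ℕ, ∫⁻ l in Ioc (B ^ (k:ℝ) * lam₁) (B ^ ((k:ℝ)+1) * lam₁),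
        ENNReal.ofReal (l ^ m * μ₁ l) ^ γ * ENNReal.ofReal l⁻¹)
        ≤ ∑' k:ℕ, ENNReal.ofReal ((B ^ m) ^ γ * (B - 1)) * A k ^ γ := ENNReal.tsum_le_tsum hBg
      _ = ENNReal.ofReal ((B ^ m) ^ γ * (B - 1)) * ∑' k:ℕ, A k ^ γ := ENNReal.tsum_mul_left
      _ ≤ ENNReal.ofReal ((B ^ m) ^ γ * (B - 1)) * (t * (u + 2 ^ γ * (K' * I₂))) := by
          refine mul_le_mul_right (hS.trans (mul_le_mul_right ?_ t)) _
          exact add_le_add le_rfl (mul_le_mul_right hT _)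
  have hfinal : (∫⁻ l in Set.Ioi (0 : ℝ),
      ENNReal.ofReal (l ^ m * μ₁ l) ^ γ * ENNReal.ofReal l⁻¹) ≤ K₁ * u + K₂ * I₂ := by
    calc (∫⁻ l in Set.Ioi (0 : ℝ), ENNReal.ofReal (l ^ m * μ₁ l) ^ γ * ENNReal.ofReal l⁻¹)
        ≤ ∫⁻ l in ((⋃ k:ℕ, Ioc (B ^ (-((k:ℝ)+1)) * lam₁) (B ^ (-(k:ℝ)) * lam₁)) ∪
            ⋃ k:ℕ, Ioc (B ^ (k:ℝ) * lam₁) (B ^ ((k:ℝ)+1) * lam₁)),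
            ENNReal.ofReal (l ^ m * μ₁ l) ^ γ * ENNReal.ofReal l⁻¹ :=
          lintegral_mono_set cover
      _ ≤ (∫⁻ l in ⋃ k:ℕ, Ioc (B ^ (-((k:ℝ)+1)) * lam₁) (B ^ (-(k:ℝ)) * lam₁),
            ENNReal.ofReal (l ^ m * μ₁ l) ^ γ * ENNReal.ofReal l⁻¹)
          + ∫⁻ l in ⋃ k:ℕ, Ioc (B ^ (k:ℝ) * lam₁) (B ^ ((k:ℝ)+1) * lam₁),
            ENNReal.ofReal (l ^ m * μ₁ l) ^ γ * ENNReal.ofReal l⁻¹ :=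
          lintegral_union_le _ _ _
      _ ≤ (∑' k:ℕ, ∫⁻ l in Ioc (B ^ (-((k:ℝ)+1)) * lam₁) (B ^ (-(k:ℝ)) * lam₁),
            ENNReal.ofReal (l ^ m * μ₁ l) ^ γ * ENNReal.ofReal l⁻¹)
          + ∑' k:ℕ, ∫⁻ l in Ioc (B ^ (k:ℝ) * lam₁) (B ^ ((k:ℝ)+1) * lam₁),
            ENNReal.ofReal (l ^ m * μ₁ l) ^ γ * ENNReal.ofReal l⁻¹ :=
          add_le_add (lintegral_iUnion_le _ _) (lintegral_iUnion_le _ _)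
      _ ≤ u * ENNReal.ofReal (B - 1) * g
          + ENNReal.ofReal ((B ^ m) ^ γ * (B - 1)) * (t * (u + 2 ^ γ * (K' * I₂))) :=
          add_le_add hsum1 hsum2
      _ = K₁ * u + K₂ * I₂ := by rw [hK₁def, hK₂def]; ring
  refine hfinal.trans ?_
  have hCK₁ : K₁ ≤ ENNReal.ofReal (max 1 (K₁.toReal + K₂.toReal)) := by
    conv_lhs => rw [← ENNReal.ofReal_toReal hK₁ne]
    exact ENNReal.ofReal_le_ofReal
      ((le_add_of_nonneg_right ENNReal.toReal_nonneg).trans (le_max_right _ _))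
  have hCK₂ : K₂ ≤ ENNReal.ofReal (max 1 (K₁.toReal + K₂.toReal)) := by
    conv_lhs => rw [← ENNReal.ofReal_toReal hK₂ne]
    exact ENNReal.ofReal_le_ofReal
      ((le_add_of_nonneg_left ENNReal.toReal_nonneg).trans (le_max_right _ _))
  calc K₁ * u + K₂ * I₂
      ≤ ENNReal.ofReal (max 1 (K₁.toReal + K₂.toReal)) * u
        + ENNReal.ofReal (max 1 (K₁.toReal + K₂.toReal)) * I₂ :=
        add_le_add (mul_le_mul_left hCK₁ _) (mul_le_mul_left hCK₂ _)
    _ = ENNReal.ofReal (max 1 (K₁.toReal + K₂.toReal)) * (u + I₂) := (mul_add _ _ _).symm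
end
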